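/- arXiv:2012.13898 — 8 statements merged into one kernel-verified Lean document; each statement's English description precedes it below -/
import Mathlib

section
/- Let G be a finite group, H a normal subgroup of G, π : G → G/H the canonical epimorphism, T a subset of G/H with H ∉ T and T = T⁻¹, and S a subset of H with e ∉ S and S = S⁻¹. Let Γ₁ = Cay(G/H, T) and Γ₂ = Cay(H, S). Then the lexicographic product Γ₁[Γ₂] is isomorphic to the Cayley graph Cay(G, π⁻¹(T) ∪ S). -/
/-- The Cayley graph of a group `G` with connection set `S`. When `1 ∉ S` and
`S = S⁻¹`, its adjacency is: `g` is adjacent to `h` iff `h * g⁻¹ ∈ S`. -/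
def cayleyGraph (G : Type) [Group G] (S : Set G) : SimpleGraph G where
  Adj g h := g ≠ h ∧ h * g⁻¹ ∈ S ∧ g * h⁻¹ ∈ S
  symm := by constructor; rintro g h ⟨h1, h2, h3⟩; exact ⟨h1.symm, h3, h2⟩
  loopless := by constructor; rintro g ⟨h1, -⟩; exact h1 rfl

/-- The lexicographic product `Γ₁[Γ₂]` of two graphs. -/
def lexProd {V₁ V₂ : Type} (Γ₁ : SimpleGraph V₁) (Γ₂ : SimpleGraph V₂) :
    SimpleGraph (V₁ × V₂) where
  Adj v u := Γ₁.Adj v.1 u.1 ∨ (v.1 = u.1 ∧ Γ₂.Adj v.2 u.2)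
  symm := by
    constructor
    rintro v u (h | ⟨h, h'⟩)
    · exact Or.inl h.symm
    · exact Or.inr ⟨h.symm, h'.symm⟩
  loopless := by
    constructor
    rintro v (h | ⟨-, h⟩)
    · exact Γ₁.irrefl h
    · exact Γ₂.irrefl h

theorem stmt2 {G : Type} [Group G] (H : Subgroup G) [H.Normal]
    (T : Set (G ⧸ H)) (S : Set G) (hSH : S ⊆ (H : Set G))
    (hT1 : (1 : G ⧸ H) ∉ T) (hTinv : ∀ t ∈ T, t⁻¹ ∈ T)
    (hS1 : (1 : G) ∉ S) (hSinv : ∀ s ∈ S, s⁻¹ ∈ S) :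
    Nonempty
      (lexProd (cayleyGraph (G ⧸ H) T) (cayleyGraph ↥H (Subtype.val ⁻¹' S)) ≃g
        cayleyGraph G (((QuotientGroup.mk : G → G ⧸ H) ⁻¹' T) ∪ S)) := by
  classical
  -- the underlying bijection : (q, h) ↦ h * q.out
  have mk_out : ∀ q : G ⧸ H, (QuotientGroup.mk q.out : G ⧸ H) = q :=
    QuotientGroup.out_eq'
  have hmem : ∀ g : G, g * ((QuotientGroup.mk g : G ⧸ H).out)⁻¹ ∈ H := by
    intro g
    refine (QuotientGroup.eq_one_iff _).1 ?_
    simp [mk_out]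
  let f : (G ⧸ H) × ↥H → G := fun p => (p.2 : G) * p.1.out
  let finv : G → (G ⧸ H) × ↥H := fun g =>
    (QuotientGroup.mk g, ⟨g * ((QuotientGroup.mk g : G ⧸ H).out)⁻¹, hmem g⟩)
  have mk_f : ∀ p : (G ⧸ H) × ↥H, (QuotientGroup.mk (f p) : G ⧸ H) = p.1 := by
    intro p
    have h1 : (QuotientGroup.mk (p.2 : G) : G ⧸ H) = 1 :=
      (QuotientGroup.eq_one_iff _).2 p.2.2
    show (QuotientGroup.mk ((p.2 : G) * p.1.out) : G ⧸ H) = p.1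
    rw [QuotientGroup.mk_mul, h1, one_mul, mk_out]
  have left_inv : Function.LeftInverse finv f := by
    intro p
    have h1 := mk_f p
    simp only [finv, h1]
    ext
    · rfl
    · show f p * (p.1.out)⁻¹ = (p.2 : G)
      simp [f, mul_assoc]
  have right_inv : Function.RightInverse finv f := by
    intro g
    show g * ((QuotientGroup.mk g : G ⧸ H).out)⁻¹ * _ = g
    simp [mul_assoc, finv]
  let e : (G ⧸ H) × ↥H ≃ G := ⟨f, finv, left_inv, right_inv⟩
  refine ⟨⟨e, ?_⟩⟩
  rintro ⟨q, h⟩ ⟨q', h'⟩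
  show (cayleyGraph G _).Adj (f (q, h)) (f (q', h')) ↔ _
  have key : ∀ (a b : G ⧸ H) (x y : ↥H),
      (QuotientGroup.mk (f (b, y) * (f (a, x))⁻¹) : G ⧸ H) = b * a⁻¹ := by
    intro a b x y
    rw [QuotientGroup.mk_mul, QuotientGroup.mk_inv, mk_f (a, x), mk_f (b, y)]
  constructor
  · rintro ⟨hne, hba, hab⟩
    rcases hba with hba | hba
    · -- b * a⁻¹ ∈ π⁻¹ T, so q' * q⁻¹ ∈ T
      have h1 : q' * q⁻¹ ∈ T := by rw [← key q q' h h']; exact hba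
      have hqq : q ≠ q' := by
        rintro rfl
        rw [mul_inv_cancel] at h1
        exact hT1 h1
      have h2 : q * q'⁻¹ ∈ T := by
        rcases hab with hab | hab
        · rw [← key q' q h' h]; exact hab
        · exfalso
          have : (QuotientGroup.mk (f (q, h) * (f (q', h'))⁻¹) : G ⧸ H) = 1 :=
            (QuotientGroup.eq_one_iff _).2 (hSH hab)
          rw [key q' q h' h] at this
          exact hqq (mul_inv_eq_one.1 this)
      exact Or.inl ⟨hqq, h1, h2⟩
    · -- b * a⁻¹ ∈ S ⊆ H, so q = q'
      have h0 : (QuotientGroup.mk (f (q', h') * (f (q, h))⁻¹) : G ⧸ H) = 1 :=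
        (QuotientGroup.eq_one_iff _).2 (hSH hba)
      rw [key q q' h h'] at h0
      have hqq : q = q' := (mul_inv_eq_one.1 h0).symm
      subst hqq
      have hval : f (q, h') * (f (q, h))⁻¹ = (h' : G) * (h : G)⁻¹ := by
        simp [f, mul_assoc]
      have hval2 : f (q, h) * (f (q, h'))⁻¹ = (h : G) * (h' : G)⁻¹ := by
        simp [f, mul_assoc]
      refine Or.inr ⟨rfl, ?_, ?_, ?_⟩
      · intro hh; subst hh; exact hne rfl
      · show ((h' * h⁻¹ : ↥H) : G) ∈ S
        push_cast
        rw [← hval]; exact hba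
      · show ((h * h'⁻¹ : ↥H) : G) ∈ S
        push_cast
        rw [← hval2]
        rcases hab with hab | hab
        · exfalso
          have : (QuotientGroup.mk (f (q, h) * (f (q, h'))⁻¹) : G ⧸ H) = 1 := by
            rw [key]; group
          rw [Set.mem_preimage, this] at hab
          exact hT1 hab
        · exact hab
  · rintro (⟨hqq, h1, h2⟩ | ⟨rfl, hhh, hba, hab⟩)
    · refine ⟨?_, Or.inl ?_, Or.inl ?_⟩
      · intro hfe
        apply hqq
        rw [← mk_f (q, h), ← mk_f (q', h'), hfe]
      · show (QuotientGroup.mk (f (q', h') * (f (q, h))⁻¹) : G ⧸ H) ∈ T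
        rw [key]; exact h1
      · show (QuotientGroup.mk (f (q, h) * (f (q', h'))⁻¹) : G ⧸ H) ∈ T
        rw [key]; exact h2
    · have hval : f (q, h') * (f (q, h))⁻¹ = (h' : G) * (h : G)⁻¹ := by
        simp [f, mul_assoc]
      have hval2 : f (q, h) * (f (q, h'))⁻¹ = (h : G) * (h' : G)⁻¹ := by
        simp [f, mul_assoc]
      refine ⟨?_, Or.inr ?_, Or.inr ?_⟩
      · intro hfe
        exact hhh (congrArg Prod.snd (e.injective hfe))
      · rw [hval]
        have := hba
        push_cast at this
        exact this
      · rw [hval2]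
        have := hab
        push_cast at this
        exact this
end

section
/- Let p be a prime with p ≡ 1 (mod 4), and let Q denote the set of nonzero squares in ℤ/pℤ. Then: the number of z ∈ Q with z+1 ∈ Q equals (p−5)/4; the number of z ∈ Q with z+1 ∉ Q ∪ {0} equals (p−1)/4; the number of nonzero z ∉ Q with z+1 ∈ Q equals (p−1)/4; and the number of nonzero z ∉ Q with z+1 ∉ Q ∪ {0} equals (p−1)/4. -/
set_option linter.all false

/-- The set of nonzero squares in `ZMod p`. -/
def nonzeroSquares (p : ℕ) : Set (ZMod p) := {z | z ≠ 0 ∧ ∃ w : ZMod p, z = w ^ 2}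

open Finset

private lemma card_tri {α : Type*} [Fintype α] [DecidableEq α] (P Q R S : α → Prop)
    [DecidablePred P] [DecidablePred Q] [DecidablePred R] [DecidablePred S]
    (h : ∀ a, Q a ∨ R a ∨ S a)
    (hQR : ∀ a, Q a → R a → False) (hQS : ∀ a, Q a → S a → False)
    (hRS : ∀ a, R a → S a → False) :
    (univ.filter P).card =
      (univ.filter fun a => P a ∧ Q a).card + (univ.filter fun a => P a ∧ R a).card
        + (univ.filter fun a => P a ∧ S a).card := by
  have d1 : Disjoint (univ.filter fun a => P a ∧ Q a) (univ.filter fun a => P a ∧ R a) := by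
    simp only [disjoint_left, mem_filter, mem_univ, true_and]
    rintro a ⟨_, hQ⟩ ⟨_, hR⟩; exact hQR a hQ hR
  have d2 : Disjoint ((univ.filter fun a => P a ∧ Q a) ∪ (univ.filter fun a => P a ∧ R a))
      (univ.filter fun a => P a ∧ S a) := by
    simp only [disjoint_left, mem_union, mem_filter, mem_univ, true_and]
    rintro a (⟨_, hQ⟩ | ⟨_, hR⟩) ⟨_, hS⟩
    · exact hQS a hQ hS
    · exact hRS a hR hS
  have key : univ.filter P =
      ((univ.filter fun a => P a ∧ Q a) ∪ (univ.filter fun a => P a ∧ R a))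
        ∪ (univ.filter fun a => P a ∧ S a) := by
    ext a
    have := h a
    simp only [mem_filter, mem_univ, true_and, mem_union]
    tauto
  rw [key, card_union_of_disjoint d2, card_union_of_disjoint d1]

set_option maxHeartbeats 1000000 in
theorem stmt4 (p : ℕ) (hp : p.Prime) (hmod : p % 4 = 1) :
    {z : ZMod p | z ∈ nonzeroSquares p ∧ z + 1 ∈ nonzeroSquares p}.ncard = (p - 5) / 4 ∧
    {z : ZMod p | z ∈ nonzeroSquares p ∧ z + 1 ∉ nonzeroSquares p ∧ z + 1 ≠ 0}.ncard
      = (p - 1) / 4 ∧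
    {z : ZMod p | z ≠ 0 ∧ z ∉ nonzeroSquares p ∧ z + 1 ∈ nonzeroSquares p}.ncard
      = (p - 1) / 4 ∧
    {z : ZMod p | z ≠ 0 ∧ z ∉ nonzeroSquares p ∧ z + 1 ∉ nonzeroSquares p ∧ z + 1 ≠ 0}.ncard
      = (p - 1) / 4 := by
  haveI : Fact p.Prime := ⟨hp⟩
  haveI : NeZero p := ⟨hp.pos.ne'⟩
  have hp2 : p ≠ 2 := by omega
  have hp5 : 5 ≤ p := by have := hp.two_le; omega
  have hchar : ringChar (ZMod p) ≠ 2 := by rw [ZMod.ringChar_zmod_n]; omega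
  set χ : MulChar (ZMod p) ℤ := quadraticChar (ZMod p) with hχ
  have tri : ∀ z : ZMod p, χ z = 0 ∨ χ z = 1 ∨ χ z = -1 := quadraticChar_isQuadratic (ZMod p)
  have hzero : ∀ z : ZMod p, χ z = 0 ↔ z = 0 := fun z => quadraticChar_eq_zero_iff
  have hneg1ne : (-1 : ZMod p) ≠ 0 := by
    intro h; exact one_ne_zero (neg_eq_zero.mp h)
  have hfneg1 : χ (-1) = 1 :=
    (quadraticChar_one_iff_isSquare hneg1ne).mpr
      (ZMod.exists_sq_eq_neg_one_iff.mpr (by omega))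
  have hf1 : χ 1 = 1 := map_one χ
  -- membership translations
  have hmem : ∀ z : ZMod p, z ∈ nonzeroSquares p ↔ χ z = 1 := by
    intro z
    by_cases hz : z = 0
    · subst hz
      simp [nonzeroSquares, hχ, quadraticChar_zero]
    · rw [hχ, quadraticChar_one_iff_isSquare hz]
      simp only [nonzeroSquares, Set.mem_setOf_eq, hz, ne_eq, not_false_iff, true_and, IsSquare]
      exact exists_congr fun w => by rw [sq]
  have hmem' : ∀ z : ZMod p, (z ∉ nonzeroSquares p ∧ z ≠ 0) ↔ χ z = -1 := by
    intro z
    rw [hχ, quadraticChar_neg_one_iff_not_isSquare]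
    by_cases hz : z = 0
    · subst hz; simp [nonzeroSquares]
    · simp only [nonzeroSquares, Set.mem_setOf_eq, hz, ne_eq, not_false_iff, true_and,
        and_true, not_and, IsSquare]
      constructor
      · intro h hs; obtain ⟨r, hr⟩ := hs; exact h ⟨r, by rw [hr, sq]⟩
      · intro h ⟨w, hw⟩; exact h ⟨w, by rw [hw, sq]⟩
  -- the four basic Finsets
  set A := univ.filter fun z : ZMod p => χ z = 1 ∧ χ (z + 1) = 1 with hA
  set B := univ.filter fun z : ZMod p => χ z = 1 ∧ χ (z + 1) = -1 with hB
  set C := univ.filter fun z : ZMod p => χ z = -1 ∧ χ (z + 1) = 1 with hC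
  set D := univ.filter fun z : ZMod p => χ z = -1 ∧ χ (z + 1) = -1 with hD
  set Q1 := univ.filter fun z : ZMod p => χ z = 1 with hQ1
  set N1 := univ.filter fun z : ZMod p => χ z = -1 with hN1
  have dtri : ∀ z : ZMod p, χ (z + 1) = 1 ∨ χ (z + 1) = -1 ∨ χ (z + 1) = 0 := by
    intro z; rcases tri (z + 1) with h | h | h <;> tauto
  have dtri' : ∀ z : ZMod p, χ z = 1 ∨ χ z = -1 ∨ χ z = 0 := by
    intro z; rcases tri z with h | h | h <;> tauto
  -- univ partition : Q1.card + N1.card + 1 = p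
  have keyU : (univ : Finset (ZMod p)) = (Q1 ∪ N1) ∪ {0} := by
    ext z
    simp only [mem_univ, mem_union, mem_singleton, hQ1, hN1, mem_filter, true_and, true_iff]
    rcases tri z with h | h | h
    · right; exact (hzero z).mp h
    · left; left; exact h
    · left; right; exact h
  have dQN : Disjoint Q1 N1 := by
    simp only [hQ1, hN1, disjoint_left, mem_filter, mem_univ, true_and]
    intro a h1 h2; omega
  have dQN0 : Disjoint (Q1 ∪ N1) ({0} : Finset (ZMod p)) := by
    simp only [hQ1, hN1, disjoint_right, mem_union, mem_filter, mem_univ, true_and,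
      mem_singleton]
    rintro a rfl
    have := (hzero 0).mpr rfl
    push_neg; omega
  have hunivcard : Q1.card + N1.card + 1 = p := by
    have : (univ : Finset (ZMod p)).card = Q1.card + N1.card + 1 := by
      rw [keyU, card_union_of_disjoint dQN0, card_union_of_disjoint dQN, card_singleton]
    rw [← this, card_univ, ZMod.card]
  -- sum of character is zero : Q1.card = N1.card
  have hQeqN : Q1.card = N1.card := by
    have hs : ∑ a ∈ (Q1 ∪ N1) ∪ {0}, χ a = 0 := by
      rw [← keyU]; exact quadraticChar_sum_zero hchar
    rw [Finset.sum_union dQN0, Finset.sum_union dQN] at hs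
    have h1 : ∑ a ∈ Q1, χ a = (Q1.card : ℤ) := by
      rw [Finset.sum_congr rfl (fun z hz => (mem_filter.mp hz).2)]
      simp
      rfl
    have h2 : ∑ a ∈ N1, χ a = -(N1.card : ℤ) := by
      rw [Finset.sum_congr rfl (fun z hz => (mem_filter.mp hz).2)]
      simp
      rfl
    have h3 : ∑ a ∈ ({0} : Finset (ZMod p)), χ a = 0 := by
      simp [hχ, quadraticChar_zero]
    rw [h1, h2, h3] at hs
    have : (Q1.card : ℤ) = N1.card := by linarith
    exact_mod_cast this
  -- row partitions
  have e1 : Q1.card = A.card + B.card + 1 := by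
    have := card_tri (fun z : ZMod p => χ z = 1) (fun z => χ (z + 1) = 1)
      (fun z => χ (z + 1) = -1) (fun z => χ (z + 1) = 0) dtri
      (fun a h1 h2 => by omega) (fun a h1 h2 => by omega) (fun a h1 h2 => by omega)
    rw [hQ1, this, hA, hB]
    congr 1
    have : (univ.filter fun z : ZMod p => χ z = 1 ∧ χ (z + 1) = 0) = {-1} := by
      ext z
      simp only [mem_filter, mem_univ, true_and, mem_singleton, hzero]
      constructor
      · rintro ⟨h1, h2⟩; linear_combination h2
      · rintro rfl; exact ⟨hfneg1, by ring⟩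
    rw [this, card_singleton]
  have e4 : N1.card = C.card + D.card := by
    have := card_tri (fun z : ZMod p => χ z = -1) (fun z => χ (z + 1) = 1)
      (fun z => χ (z + 1) = -1) (fun z => χ (z + 1) = 0) dtri
      (fun a h1 h2 => by omega) (fun a h1 h2 => by omega) (fun a h1 h2 => by omega)
    rw [hN1, this, hC, hD]
    have : (univ.filter fun z : ZMod p => χ z = -1 ∧ χ (z + 1) = 0) = ∅ := by
      ext z
      simp only [mem_filter, mem_univ, true_and, notMem_empty, iff_false, not_and, hzero]
      intro h1 h2
      have hz : z = -1 := by linear_combination h2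
      rw [hz] at h1; omega
    rw [this, card_empty, add_zero]
  -- column partitions
  have hshift : ∀ c : ℤ, (univ.filter fun z : ZMod p => χ (z + 1) = c).card
      = (univ.filter fun z : ZMod p => χ z = c).card := by
    intro c
    apply Finset.card_equiv (Equiv.addRight (1 : ZMod p))
    intro z
    simp [Equiv.addRight]
  have e2 : Q1.card = A.card + C.card + 1 := by
    have h := card_tri (fun z : ZMod p => χ (z + 1) = 1) (fun z => χ z = 1)
      (fun z => χ z = -1) (fun z => χ z = 0) dtri'
      (fun a h1 h2 => by omega) (fun a h1 h2 => by omega) (fun a h1 h2 => by omega)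
    rw [hshift 1] at h
    rw [hQ1, h]
    have hAc : (univ.filter fun z : ZMod p => χ (z + 1) = 1 ∧ χ z = 1) = A := by
      rw [hA]; ext z; simp [and_comm]
    have hCc : (univ.filter fun z : ZMod p => χ (z + 1) = 1 ∧ χ z = -1) = C := by
      rw [hC]; ext z; simp [and_comm]
    have hlast : (univ.filter fun z : ZMod p => χ (z + 1) = 1 ∧ χ z = 0) = {0} := by
      ext z
      simp only [mem_filter, mem_univ, true_and, mem_singleton, hzero]
      constructor
      · rintro ⟨_, rfl⟩; rfl
      · rintro rfl; exact ⟨by simpa using hf1, rfl⟩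
    rw [hAc, hCc, hlast, card_singleton]
  have e3 : N1.card = B.card + D.card := by
    have h := card_tri (fun z : ZMod p => χ (z + 1) = -1) (fun z => χ z = 1)
      (fun z => χ z = -1) (fun z => χ z = 0) dtri'
      (fun a h1 h2 => by omega) (fun a h1 h2 => by omega) (fun a h1 h2 => by omega)
    rw [hshift (-1)] at h
    rw [hN1, h]
    have hBc : (univ.filter fun z : ZMod p => χ (z + 1) = -1 ∧ χ z = 1) = B := by
      rw [hB]; ext z; simp [and_comm]
    have hDc : (univ.filter fun z : ZMod p => χ (z + 1) = -1 ∧ χ z = -1) = D := by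
      rw [hD]; ext z; simp [and_comm]
    have hlast : (univ.filter fun z : ZMod p => χ (z + 1) = -1 ∧ χ z = 0) = ∅ := by
      ext z
      simp only [mem_filter, mem_univ, true_and, notMem_empty, iff_false, not_and, hzero]
      rintro h1 rfl
      rw [zero_add, hf1] at h1; omega
    rw [hBc, hDc, hlast, card_empty, add_zero]
  -- the key diagonal relation : A.card + D.card + 1 = Q1.card
  have e5 : Q1.card = A.card + D.card + 1 := by
    set S1 := univ.filter fun z : ZMod p => χ z * χ (z + 1) = 1 with hS1
    have hsplit : S1.card = A.card + D.card := by
      have key : S1 = A ∪ D := by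
        ext z
        simp only [hS1, hA, hD, mem_filter, mem_univ, true_and, mem_union]
        constructor
        · intro h
          rcases tri z with h1 | h1 | h1 <;> rcases tri (z + 1) with h2 | h2 | h2 <;>
            rw [h1, h2] at h <;> norm_num at h <;> tauto
        · rintro (⟨h1, h2⟩ | ⟨h1, h2⟩) <;> rw [h1, h2] <;> ring
      have dAD : Disjoint A D := by
        simp only [hA, hD, disjoint_left, mem_filter, mem_univ, true_and]
        rintro a ⟨h1, _⟩ ⟨h2, _⟩; omega
      rw [key, card_union_of_disjoint dAD]
    have hbij : S1.card = (univ.filter fun u : ZMod p => χ u = 1 ∧ u ≠ 1).card := by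
      apply Finset.card_nbij' (fun z => 1 + z⁻¹) (fun u => (u - 1)⁻¹)
      · intro z hz
        simp only [hS1, mem_coe, mem_filter, mem_univ, true_and] at hz
        have hz0 : z ≠ 0 := by
          intro h; rw [h, (hzero 0).mpr rfl, zero_mul] at hz; omega
        have hz1 : z + 1 ≠ 0 := by
          intro h; rw [(hzero _).mpr h, mul_zero] at hz; omega
        have hcomp : χ z * χ (z + 1) = χ (1 + z⁻¹) := by
          rw [← map_mul]
          have : z * (z + 1) = z ^ 2 * (1 + z⁻¹) := by
            linear_combination (-z) * (mul_inv_cancel₀ hz0)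
          rw [this, map_mul, quadraticChar_sq_one' hz0, one_mul]
        simp only [mem_coe, mem_filter, mem_univ, true_and]
        constructor
        · rw [← hcomp]; exact hz
        · intro h
          have : z⁻¹ = 0 := by linear_combination h
          exact inv_ne_zero hz0 this
      · intro u hu
        simp only [mem_coe, mem_filter, mem_univ, true_and] at hu
        obtain ⟨hu1, hu2⟩ := hu
        have hu0 : u ≠ 0 := by
          intro h; rw [h, (hzero 0).mpr rfl] at hu1; omega
        have hsub : u - 1 ≠ 0 := sub_ne_zero.mpr hu2
        simp only [hS1, mem_coe, mem_filter, mem_univ, true_and]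
        rw [← map_mul]
        have : (u - 1)⁻¹ * ((u - 1)⁻¹ + 1) = u * ((u - 1)⁻¹) ^ 2 := by
          linear_combination (-(u - 1)⁻¹) * (mul_inv_cancel₀ hsub)
        rw [this, map_mul, quadraticChar_sq_one' (inv_ne_zero hsub), mul_one, hu1]
      · intro z hz
        simp only [hS1, mem_coe, mem_filter, mem_univ, true_and] at hz
        have hz0 : z ≠ 0 := by
          intro h; rw [h, (hzero 0).mpr rfl, zero_mul] at hz; omega
        beta_reduce
        rw [add_sub_cancel_left, inv_inv]
      · intro u hu
        simp only [mem_coe, mem_filter, mem_univ, true_and] at hu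
        have hsub : u - 1 ≠ 0 := sub_ne_zero.mpr hu.2
        beta_reduce
        rw [inv_inv]; ring
    have hQsplit : Q1.card = (univ.filter fun u : ZMod p => χ u = 1 ∧ u ≠ 1).card + 1 := by
      have key : Q1 = (univ.filter fun u : ZMod p => χ u = 1 ∧ u ≠ 1) ∪ {1} := by
        ext u
        simp only [hQ1, mem_filter, mem_univ, true_and, mem_union, mem_singleton]
        constructor
        · intro h
          by_cases hu : u = 1
          · right; exact hu
          · left; exact ⟨h, hu⟩
        · rintro (⟨h, _⟩ | rfl)
          · exact h
          · exact hf1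
      have d : Disjoint (univ.filter fun u : ZMod p => χ u = 1 ∧ u ≠ 1) ({1} : Finset (ZMod p)) := by
        simp only [disjoint_right, mem_singleton, mem_filter, mem_univ, true_and]
        rintro a rfl ⟨_, h⟩; exact h rfl
      rw [key, card_union_of_disjoint d, card_singleton]
    omega
  -- translate the four set-cardinalities to Finset cards
  have hcA : {z : ZMod p | z ∈ nonzeroSquares p ∧ z + 1 ∈ nonzeroSquares p}.ncard = A.card := by
    rw [show {z : ZMod p | z ∈ nonzeroSquares p ∧ z + 1 ∈ nonzeroSquares p} = (A : Set (ZMod p)) by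
      ext z; simp [hA, hmem z, hmem (z + 1)]]
    exact Set.ncard_coe_finset _
  have hcB : {z : ZMod p | z ∈ nonzeroSquares p ∧ z + 1 ∉ nonzeroSquares p ∧ z + 1 ≠ 0}.ncard
      = B.card := by
    rw [show {z : ZMod p | z ∈ nonzeroSquares p ∧ z + 1 ∉ nonzeroSquares p ∧ z + 1 ≠ 0}
        = (B : Set (ZMod p)) by
      ext z
      simp only [Set.mem_setOf_eq, hB, coe_filter, mem_univ, true_and]
      rw [hmem z, ← hmem' (z + 1)]]
    exact Set.ncard_coe_finset _
  have hcC : {z : ZMod p | z ≠ 0 ∧ z ∉ nonzeroSquares p ∧ z + 1 ∈ nonzeroSquares p}.ncard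
      = C.card := by
    rw [show {z : ZMod p | z ≠ 0 ∧ z ∉ nonzeroSquares p ∧ z + 1 ∈ nonzeroSquares p}
        = (C : Set (ZMod p)) by
      ext z
      simp only [Set.mem_setOf_eq, hC, coe_filter, mem_univ, true_and]
      rw [← hmem' z, hmem (z + 1)]
      tauto]
    exact Set.ncard_coe_finset _
  have hcD : {z : ZMod p | z ≠ 0 ∧ z ∉ nonzeroSquares p ∧ z + 1 ∉ nonzeroSquares p
      ∧ z + 1 ≠ 0}.ncard = D.card := by
    rw [show {z : ZMod p | z ≠ 0 ∧ z ∉ nonzeroSquares p ∧ z + 1 ∉ nonzeroSquares p ∧ z + 1 ≠ 0}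
        = (D : Set (ZMod p)) by
      ext z
      simp only [Set.mem_setOf_eq, hD, coe_filter, mem_univ, true_and]
      rw [← hmem' z, ← hmem' (z + 1)]
      tauto]
    exact Set.ncard_coe_finset _
  rw [hcA, hcB, hcC, hcD]
  refine ⟨?_, ?_, ?_, ?_⟩ <;> omega
end

section
/- Let p be a prime with p ≡ 1 (mod 3), let C denote the set of nonzero cubes in ℤ/pℤ, and let N be the number of z ∈ C such that z+1 ∈ C. Then there exist integers x and y such that 4p = x² + 27y², x ≡ 1 (mod 3), and 9N = p − 8 + x. -/
open Finset Complex

private lemma cube_sum_zero {w : ℂ} (h3 : w ^ 3 = 1) (h1 : w ≠ 1) : 1 + w + w ^ 2 = 0 := by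
  have h : (w - 1) * (1 + w + w ^ 2) = 0 := by linear_combination h3
  rcases mul_eq_zero.mp h with h' | h'
  · exact absurd (sub_eq_zero.mp h') h1
  · exact h'

private lemma adjoin_decomp {ζ : ℂ} (hsq : ζ ^ 2 = -1 - ζ) {z : ℂ}
    (hz : z ∈ Algebra.adjoin ℤ {ζ}) : ∃ a b : ℤ, z = (a : ℂ) + (b : ℂ) * ζ := by
  induction hz using Algebra.adjoin_induction with
  | mem x hx =>
      rw [Set.mem_singleton_iff] at hx
      exact ⟨0, 1, by rw [hx]; push_cast; ring⟩
  | algebraMap r => exact ⟨r, 0, by push_cast; simp⟩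
  | add x y hx hy ihx ihy =>
      obtain ⟨a, b, rfl⟩ := ihx
      obtain ⟨c, d, rfl⟩ := ihy
      exact ⟨a + c, b + d, by push_cast; ring⟩
  | mul x y hx hy ihx ihy =>
      obtain ⟨a, b, rfl⟩ := ihx
      obtain ⟨c, d, rfl⟩ := ihy
      refine ⟨a * c - b * d, a * d + b * c - b * d, ?_⟩
      push_cast
      linear_combination ((b : ℂ) * d) * hsq

private lemma cube_mul_conj_one {w : ℂ} (h3 : w ^ 3 = 1) : w * (starRingEnd ℂ) w = 1 := by
  have habs : ‖w‖ ^ 3 = 1 := by rw [← norm_pow, h3, norm_one]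
  have h0 : 0 ≤ ‖w‖ := norm_nonneg w
  have h1 : ‖w‖ = 1 := by
    have hfac : (‖w‖ - 1) * ((‖w‖) ^ 2 + ‖w‖ + 1) = 0 := by
      linear_combination habs
    rcases mul_eq_zero.mp hfac with h' | h'
    · linarith [sub_eq_zero.mp h']
    · nlinarith
  rw [Complex.mul_conj, Complex.normSq_eq_norm_sq, h1]
  norm_num
/-- The set of nonzero cubes in `ZMod p`. -/
def nonzeroCubes (p : ℕ) : Set (ZMod p) := {z | z ≠ 0 ∧ ∃ w : ZMod p, z = w ^ 3}

theorem stmt5 (p : ℕ) (hp : p.Prime) (hmod : p % 3 = 1) :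
    ∃ x y : ℤ, 4 * (p : ℤ) = x ^ 2 + 27 * y ^ 2 ∧ x % 3 = 1 ∧
      9 * ({z : ZMod p | z ∈ nonzeroCubes p ∧ z + 1 ∈ nonzeroCubes p}.ncard : ℤ)
        = (p : ℤ) - 8 + x := by
  classical
  haveI : Fact p.Prime := ⟨hp⟩
  haveI : Fact (Nat.Prime 3) := ⟨by norm_num⟩
  have hp1 : 1 < p := hp.one_lt
  have hcard : Fintype.card (ZMod p) = p := ZMod.card p
  have hdvd : 3 ∣ Fintype.card (ZMod p) - 1 := by rw [hcard]; omega
  -- primitive cube root of unity in ℂ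
  set ζ : ℂ := Complex.exp (2 * Real.pi * Complex.I / 3) with hζdef
  have hζ : IsPrimitiveRoot ζ 3 := Complex.isPrimitiveRoot_exp 3 (by norm_num)
  have hζ3 : ζ ^ 3 = 1 := hζ.pow_eq_one
  have hζ1 : ζ ≠ 1 := hζ.ne_one (by norm_num)
  have hsq : ζ ^ 2 = -1 - ζ := by linear_combination cube_sum_zero hζ3 hζ1
  -- cubic character
  obtain ⟨χ, hχord⟩ := MulChar.exists_mulChar_orderOf (ZMod p) hdvd hζ
  have hχ3 : χ ^ 3 = 1 := by rw [← hχord]; exact pow_orderOf_eq_one χ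
  have hχ1 : χ ≠ 1 := by
    intro h; rw [h, orderOf_one] at hχord; norm_num at hχord
  have hχ2ne : χ ^ 2 ≠ 1 := by
    intro h
    have := orderOf_dvd_of_pow_eq_one h
    rw [hχord] at this
    exact absurd (Nat.le_of_dvd (by norm_num) this) (by norm_num)
  have hχsq_inv : χ ^ 2 = χ⁻¹ := by
    apply eq_inv_of_mul_eq_one_left
    rw [← pow_succ]; exact hχ3
  -- χ(-1) = 1
  have hm1 : χ (-1) = 1 := by
    have hw2 : χ (-1) * χ (-1) = 1 := by
      rw [← map_mul, neg_mul_neg, one_mul, map_one]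
    have hw3 : χ (-1) ^ 3 = 1 := by
      rw [← MulChar.pow_apply' χ (by norm_num), hχ3, MulChar.one_apply isUnit_one.neg]
    calc χ (-1) = χ (-1) * (χ (-1) * χ (-1)) := by rw [hw2, mul_one]
      _ = χ (-1) ^ 3 := by ring
      _ = 1 := hw3
  -- χ c = 1 ↔ c nonzero cube
  have key : ∀ c : ZMod p, c ≠ 0 → (χ c = 1 ↔ c ∈ nonzeroCubes p) := by
    intro c hc
    obtain ⟨g, hg⟩ := IsCyclic.exists_generator (α := (ZMod p)ˣ)
    set T := χ.toUnitHom with hT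
    have hTapp : ∀ u : (ZMod p)ˣ, χ (u : ZMod p) = ((T u : ℂˣ) : ℂ) := by
      intro u; rw [hT, MulChar.coe_toUnitHom]
    have hTg3 : T g ^ 3 = 1 := by
      ext
      push_cast
      rw [← hTapp, ← MulChar.pow_apply' χ (by norm_num), hχ3,
        MulChar.one_apply g.isUnit]
    have hTgne : T g ≠ 1 := by
      intro h
      apply hχ1
      apply MulChar.ext
      intro u
      obtain ⟨k, hk⟩ := hg u
      rw [← hk, hTapp, map_zpow, h, one_zpow, MulChar.one_apply (g ^ k).isUnit]
      norm_num
    have hord : orderOf (T g) = 3 := orderOf_eq_prime hTg3 hTgne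
    obtain ⟨k, hk⟩ := hg (isUnit_iff_ne_zero.mpr hc).unit
    have hck : c = ((g ^ k : (ZMod p)ˣ) : ZMod p) := by
      conv_lhs => rw [← (isUnit_iff_ne_zero.mpr hc).unit_spec, ← hk]
    constructor
    · intro h1
      have : T g ^ k = 1 := by
        have : χ c = ((T (g ^ k) : ℂˣ) : ℂ) := by rw [hck, hTapp]
        rw [h1] at this
        have h2 : T (g ^ k) = 1 := by ext; rw [← this]; norm_num
        rwa [map_zpow] at h2
      have hdvd3 : (3 : ℤ) ∣ k := by
        have := orderOf_dvd_iff_zpow_eq_one.mpr this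
        rwa [hord] at this
      obtain ⟨m, rfl⟩ := hdvd3
      refine ⟨hc, ((g ^ m : (ZMod p)ˣ) : ZMod p), ?_⟩
      rw [hck, show (3:ℤ) * m = m * 3 by ring, zpow_mul]
      norm_cast
    · rintro ⟨-, w, rfl⟩
      have hw : w ≠ 0 := by
        intro h; rw [h] at hc; simp at hc
      rw [map_pow, ← MulChar.pow_apply' χ (by norm_num), hχ3,
        MulChar.one_apply (isUnit_iff_ne_zero.mpr hw)]
  -- the delta function: counts cube-ness
  set δ : ZMod p → ℂ := fun c => (1 : MulChar (ZMod p) ℂ) c + χ c + (χ ^ 2) c with hδdef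
  have hδ3 : ∀ c : ZMod p, c ∈ nonzeroCubes p → δ c = 3 := by
    intro c hcmem
    have hc : c ≠ 0 := hcmem.1
    have h1 : χ c = 1 := (key c hc).mpr hcmem
    simp only [hδdef]
    rw [MulChar.one_apply (isUnit_iff_ne_zero.mpr hc), MulChar.pow_apply' χ (by norm_num), h1]
    norm_num
  have hδ0 : ∀ c : ZMod p, c ∉ nonzeroCubes p → δ c = 0 := by
    intro c hcmem
    rcases eq_or_ne c 0 with rfl | hc
    · simp only [hδdef]
      rw [MulChar.map_zero, MulChar.map_zero, MulChar.map_zero]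
      norm_num
    · have h1 : χ c ≠ 1 := fun h => hcmem ((key c hc).mp h)
      have h3 : χ c ^ 3 = 1 := by
        rw [← MulChar.pow_apply' χ (by norm_num), hχ3,
          MulChar.one_apply (isUnit_iff_ne_zero.mpr hc)]
      simp only [hδdef]
      rw [MulChar.one_apply (isUnit_iff_ne_zero.mpr hc), MulChar.pow_apply' χ (by norm_num)]
      exact cube_sum_zero h3 h1
  -- shift: sums against ψ(z+1) are Jacobi sums
  have hshift : ∀ φ ψ : MulChar (ZMod p) ℂ, φ (-1) = 1 →
      ∑ z : ZMod p, φ z * ψ (z + 1) = jacobiSum φ ψ := by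
    intro φ ψ hφ
    calc ∑ z : ZMod p, φ z * ψ (z + 1)
        = ∑ x : ZMod p, φ (Equiv.neg (ZMod p) x) * ψ ((Equiv.neg (ZMod p) x) + 1) :=
          (Equiv.sum_comp (Equiv.neg (ZMod p)) (fun z => φ z * ψ (z + 1))).symm
      _ = ∑ x : ZMod p, φ x * ψ (1 - x) := by
          refine Finset.sum_congr rfl fun x _ => ?_
          rw [Equiv.neg_apply, show (-x : ZMod p) = -1 * x by ring, map_mul, hφ, one_mul,
            show (-1 * x + 1 : ZMod p) = 1 - x by ring]
      _ = jacobiSum φ ψ := rfl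
  have hχ2m1 : (χ ^ 2) (-1) = 1 := by rw [MulChar.pow_apply' χ (by norm_num), hm1, one_pow]
  have h1m1 : (1 : MulChar (ZMod p) ℂ) (-1) = 1 := MulChar.one_apply isUnit_one.neg
  -- complex conjugation gives the inverse character
  have hcomp : χ.ringHomComp (starRingEnd ℂ) = χ⁻¹ := by
    apply MulChar.ext
    intro u
    rw [MulChar.ringHomComp_apply, MulChar.inv_apply_eq_inv, Ring.inverse_eq_inv']
    have h3 : χ (u : ZMod p) ^ 3 = 1 := by
      rw [← MulChar.pow_apply' χ (by norm_num), hχ3, MulChar.one_apply u.isUnit]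
    exact eq_inv_of_mul_eq_one_right (cube_mul_conj_one h3)
  have hconjJ : jacobiSum χ⁻¹ χ⁻¹ = (starRingEnd ℂ) (jacobiSum χ χ) := by
    rw [← hcomp]; exact jacobiSum_ringHomComp χ χ _
  have hring : ringChar ℂ ≠ ringChar (ZMod p) := by
    rw [ringChar.eq_zero, ZMod.ringChar_zmod_n]; omega
  have hnorm : jacobiSum χ χ * (starRingEnd ℂ) (jacobiSum χ χ) = (p : ℂ) := by
    rw [← hconjJ]
    have h := jacobiSum_mul_jacobiSum_inv hring hχ1 hχ1 (by rw [← sq]; exact hχ2ne)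
    rwa [hcard] at h
  -- decompose J over ℤ[ζ]
  obtain ⟨z, hzmem, hJeq⟩ := exists_jacobiSum_eq_neg_one_add (by norm_num) hχ3 hχ3 hdvd hζ
  obtain ⟨cc, dd, hzeq⟩ := adjoin_decomp hsq hzmem
  set a : ℤ := 3 * dd - 1 with ha
  set b : ℤ := 3 * dd - 3 * cc with hb
  have hJab : jacobiSum χ χ = (a : ℂ) + (b : ℂ) * ζ := by
    rw [hJeq, hzeq, ha, hb]
    push_cast
    linear_combination ((dd : ℂ) * ζ + cc - 3 * dd) * hsq
  have hζ0 : ζ ≠ 0 := fun h0 => by rw [h0] at hζ3; norm_num at hζ3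
  have hconjζ : (starRingEnd ℂ) ζ = -1 - ζ := by
    apply mul_left_cancel₀ hζ0
    rw [cube_mul_conj_one hζ3]
    linear_combination hsq
  have hpab : (p : ℤ) = a ^ 2 - a * b + b ^ 2 := by
    have hC : (p : ℂ) = ((a ^ 2 - a * b + b ^ 2 : ℤ) : ℂ) := by
      rw [← hnorm, hJab, map_add, map_mul, map_intCast, map_intCast, hconjζ]
      push_cast
      linear_combination (-(b : ℂ) ^ 2) * hsq
    exact_mod_cast hC
  have htrace : jacobiSum χ χ + (starRingEnd ℂ) (jacobiSum χ χ) = ((2 * a - b : ℤ) : ℂ) := by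
    rw [hJab, map_add, map_mul, map_intCast, map_intCast, hconjζ]
    push_cast
    ring
  -- the two evaluations of the big sum
  have hsum2 : ∑ z : ZMod p, δ z * δ (z + 1)
      = (p : ℂ) - 8 + (jacobiSum χ χ + (starRingEnd ℂ) (jacobiSum χ χ)) := by
    have hexp : ∀ z : ZMod p, δ z * δ (z + 1) =
        (1 : MulChar (ZMod p) ℂ) z * (1 : MulChar (ZMod p) ℂ) (z + 1)
        + (1 : MulChar (ZMod p) ℂ) z * χ (z + 1)
        + (1 : MulChar (ZMod p) ℂ) z * (χ ^ 2) (z + 1)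
        + χ z * (1 : MulChar (ZMod p) ℂ) (z + 1)
        + χ z * χ (z + 1)
        + χ z * (χ ^ 2) (z + 1)
        + (χ ^ 2) z * (1 : MulChar (ZMod p) ℂ) (z + 1)
        + (χ ^ 2) z * χ (z + 1)
        + (χ ^ 2) z * (χ ^ 2) (z + 1) := fun z => by simp only [hδdef]; ring
    rw [Finset.sum_congr rfl fun z _ => hexp z]
    simp only [Finset.sum_add_distrib]
    rw [hshift 1 1 h1m1, hshift 1 χ h1m1, hshift 1 (χ ^ 2) h1m1, hshift χ 1 hm1,
      hshift χ χ hm1, hshift χ (χ ^ 2) hm1, hshift (χ ^ 2) 1 hχ2m1, hshift (χ ^ 2) χ hχ2m1,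
      hshift (χ ^ 2) (χ ^ 2) hχ2m1]
    have h00 : jacobiSum (1 : MulChar (ZMod p) ℂ) 1 = (p : ℂ) - 2 := by
      rw [jacobiSum_one_one, hcard]
    have h01 : jacobiSum (1 : MulChar (ZMod p) ℂ) χ = -1 := jacobiSum_one_nontrivial hχ1
    have h02 : jacobiSum (1 : MulChar (ZMod p) ℂ) (χ ^ 2) = -1 := jacobiSum_one_nontrivial hχ2ne
    have h10 : jacobiSum χ (1 : MulChar (ZMod p) ℂ) = -1 := by rw [jacobiSum_comm]; exact h01
    have h20 : jacobiSum (χ ^ 2) (1 : MulChar (ZMod p) ℂ) = -1 := by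
      rw [jacobiSum_comm]; exact h02
    have h12 : jacobiSum χ (χ ^ 2) = -1 := by
      rw [hχsq_inv, jacobiSum_nontrivial_inv hχ1, hm1]
    have h21 : jacobiSum (χ ^ 2) χ = -1 := by rw [jacobiSum_comm]; exact h12
    have h22 : jacobiSum (χ ^ 2) (χ ^ 2) = (starRingEnd ℂ) (jacobiSum χ χ) := by
      rw [hχsq_inv]; exact hconjJ
    rw [h00, h01, h02, h10, h12, h20, h21, h22]
    ring
  haveI hfin : Fintype ↥{z : ZMod p | z ∈ nonzeroCubes p ∧ z + 1 ∈ nonzeroCubes p} :=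
    Fintype.ofFinite _
  have hsum1 : ∑ z : ZMod p, δ z * δ (z + 1)
      = 9 * (({z : ZMod p | z ∈ nonzeroCubes p ∧ z + 1 ∈ nonzeroCubes p}).ncard : ℂ) := by
    have hterm : ∀ z : ZMod p, δ z * δ (z + 1)
        = if z ∈ nonzeroCubes p ∧ z + 1 ∈ nonzeroCubes p then (9 : ℂ) else 0 := by
      intro z
      by_cases hz : z ∈ nonzeroCubes p ∧ z + 1 ∈ nonzeroCubes p
      · rw [if_pos hz, hδ3 z hz.1, hδ3 _ hz.2]; norm_num
      · rw [if_neg hz]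
        rcases not_and_or.mp hz with h | h
        · rw [hδ0 z h, zero_mul]
        · rw [hδ0 _ h, mul_zero]
    rw [Finset.sum_congr rfl fun z _ => hterm z, ← Finset.sum_filter,
      Finset.sum_const, nsmul_eq_mul, mul_comm]
    congr 2
    rw [Set.ncard_eq_toFinset_card']
    congr 1
    ext w
    simp [Set.mem_toFinset]
  -- put it together
  refine ⟨2 * a - b, dd - cc, ?_, ?_, ?_⟩
  · linear_combination 4 * hpab + 3 * (b + 3 * (dd - cc)) * hb
  · rw [ha, hb]; omega
  · have hC : 9 * (({z : ZMod p | z ∈ nonzeroCubes p ∧ z + 1 ∈ nonzeroCubes p}).ncard : ℂ)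
        = ((((p : ℤ) - 8 + (2 * a - b)) : ℤ) : ℂ) := by
      rw [← hsum1, hsum2, htrace]
      push_cast
      ring
    exact_mod_cast hC
end

section
/- Let p be a prime and suppose that integers x₁, y₁, x₂, y₂ satisfy 4p = x₁² + 27y₁² and 4p = x₂² + 27y₂². Then x₁² = x₂² and y₁² = y₂²; that is, in a representation 4p = x² + 27y² the integers x² and y² are uniquely determined by p. -/
lemma aux6 (p : ℕ) (hp : p.Prime) (hp27 : ¬ (p : ℤ) ∣ 27) (x₁ y₁ x₂ y₂ : ℤ)
    (h1 : 4 * (p : ℤ) = x₁ ^ 2 + 27 * y₁ ^ 2)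
    (h2 : 4 * (p : ℤ) = x₂ ^ 2 + 27 * y₂ ^ 2)
    (hd : (p : ℤ) ∣ x₁ * x₂ + 27 * y₁ * y₂) :
    y₁ ^ 2 = y₂ ^ 2 := by
  have hpI : Prime (p : ℤ) := Nat.prime_iff_prime_int.mp hp
  obtain ⟨A, hA⟩ := hd
  set B : ℤ := x₁ * y₂ - x₂ * y₁ with hB
  have h27 : 27 * B ^ 2 = (p : ℤ) ^ 2 * (16 - A ^ 2) := by
    have : (x₁ * x₂ + 27 * y₁ * y₂) ^ 2 + 27 * B ^ 2 = 16 * (p : ℤ) ^ 2 := by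
      rw [hB]
      linear_combination (-(x₂ ^ 2 + 27 * y₂ ^ 2)) * h1 - 4 * (p : ℤ) * h2
    linear_combination this - (x₁ * x₂ + 27 * y₁ * y₂ + (p : ℤ) * A) * hA
  have hpdvd : (p : ℤ) ∣ 27 * B ^ 2 := ⟨(p : ℤ) * (16 - A ^ 2), by linear_combination h27⟩
  have hpB : (p : ℤ) ∣ B := by
    rcases hpI.dvd_mul.mp hpdvd with h | h
    · exact absurd h hp27
    · exact hpI.dvd_of_dvd_pow h
  obtain ⟨C, hC⟩ := hpB
  have hp0 : (p : ℤ) ≠ 0 := by exact_mod_cast hp.ne_zero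
  have hcancel : 27 * C ^ 2 = 16 - A ^ 2 := by
    have : (p : ℤ) ^ 2 * (27 * C ^ 2) = (p : ℤ) ^ 2 * (16 - A ^ 2) := by
      rw [← h27, hC]; ring
    exact mul_left_cancel₀ (pow_ne_zero 2 hp0) this
  have hC0 : C = 0 := by
    by_contra h
    have h1C : 0 < C ^ 2 := by positivity
    have : 1 ≤ C ^ 2 := h1C
    nlinarith [sq_nonneg A]
  have hB0 : x₁ * y₂ - x₂ * y₁ = 0 := by rw [← hB, hC, hC0]; ring
  have h4 : 4 * (p : ℤ) * (y₂ ^ 2 - y₁ ^ 2) = 0 := by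
    linear_combination y₂ ^ 2 * h1 - y₁ ^ 2 * h2 + (x₁ * y₂ + x₂ * y₁) * hB0
  have := mul_eq_zero.mp h4
  rcases this with h | h
  · exact absurd h (by positivity)
  · linarith

theorem stmt6 (p : ℕ) (hp : p.Prime) (x₁ y₁ x₂ y₂ : ℤ)
    (h1 : 4 * (p : ℤ) = x₁ ^ 2 + 27 * y₁ ^ 2)
    (h2 : 4 * (p : ℤ) = x₂ ^ 2 + 27 * y₂ ^ 2) :
    x₁ ^ 2 = x₂ ^ 2 ∧ y₁ ^ 2 = y₂ ^ 2 := by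
  have hpI : Prime (p : ℤ) := Nat.prime_iff_prime_int.mp hp
  -- rule out p = 3 via mod 9
  have hp3 : p ≠ 3 := by
    rintro rfl
    have h9 : ((4 * ((3:ℕ) : ℤ) : ℤ) : ZMod 9) = ((x₁ ^ 2 + 27 * y₁ ^ 2 : ℤ) : ZMod 9) := by
      rw [h1]
    push_cast at h9
    have key : ∀ a b : ZMod 9, (4 * 3 : ZMod 9) ≠ a ^ 2 + 27 * b ^ 2 := by decide
    exact key (x₁ : ZMod 9) (y₁ : ZMod 9) (by linear_combination h9)
  have hp27 : ¬ (p : ℤ) ∣ 27 := by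
    intro h
    have h' : p ∣ 27 := by exact_mod_cast h
    have h3 : p ∣ 3 := hp.dvd_of_dvd_pow (n := 3) (by simpa using h')
    exact hp3 ((Nat.prime_dvd_prime_iff_eq hp Nat.prime_three).mp h3)
  have key : (p : ℤ) ∣ (x₁ * x₂ + 27 * y₁ * y₂) * (x₁ * x₂ - 27 * y₁ * y₂) := by
    refine ⟨16 * (p : ℤ) - 108 * y₁ ^ 2 - 108 * y₂ ^ 2, ?_⟩
    linear_combination (-x₂ ^ 2) * h1 + (27 * y₁ ^ 2 - 4 * (p : ℤ)) * h2
  have hy : y₁ ^ 2 = y₂ ^ 2 := by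
    rcases hpI.dvd_mul.mp key with hd | hd
    · exact aux6 p hp hp27 x₁ y₁ x₂ y₂ h1 h2 hd
    · have h2' : 4 * (p : ℤ) = x₂ ^ 2 + 27 * (-y₂) ^ 2 := by linear_combination h2
      have hd' : (p : ℤ) ∣ x₁ * x₂ + 27 * y₁ * (-y₂) := by
        obtain ⟨c, hc⟩ := hd; exact ⟨c, by linear_combination hc⟩
      have := aux6 p hp hp27 x₁ y₁ x₂ (-y₂) h1 h2' hd'
      linarith [this, neg_sq y₂]
  exact ⟨by linarith, hy⟩
end

section
/- Let p be a prime with p ≡ 1 (mod 3) such that (p−1)/3 is even. Then the generalized Paley graph GPaley(p,(p−1)/3) is not strongly regular; in fact there exist two pairs of distinct non-adjacent vertices having different numbers of common neighbors. -/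
open Finset

/-- `z` is a nonzero cube in `ZMod p`. -/
private def Cb (p : ℕ) (z : ZMod p) : Prop := ∃ w : ZMod p, w ≠ 0 ∧ z = w ^ 3

private lemma cb_neg {p : ℕ} {z : ZMod p} (h : Cb p z) : Cb p (-z) := by
  obtain ⟨w, hw, rfl⟩ := h
  exact ⟨-w, neg_ne_zero.mpr hw, by rw [Odd.neg_pow ⟨1, by norm_num⟩]⟩

private lemma cb_ne_zero {p : ℕ} [Fact p.Prime] {z : ZMod p} (h : Cb p z) : z ≠ 0 := by
  obtain ⟨w, hw, rfl⟩ := h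
  exact pow_ne_zero _ hw

private theorem gp_core (p : ℕ) (hp : p.Prime) (hmod : p % 3 = 1) :
    ∃ d1 d2 : ZMod p, d1 ≠ 0 ∧ d2 ≠ 0 ∧ ¬ Cb p d1 ∧ ¬ Cb p d2 ∧
      {x : ZMod p | Cb p x ∧ Cb p (x - d1)}.ncard ≠
      {x : ZMod p | Cb p x ∧ Cb p (x - d2)}.ncard := by
  classical
  haveI : Fact p.Prime := ⟨hp⟩
  haveI : Fact (Nat.Prime 3) := ⟨by norm_num⟩
  -- the primitive cube root of unity
  set ω : ℂ := Complex.exp (2 * Real.pi * Complex.I / 3) with hωdef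
  have hωprim : IsPrimitiveRoot ω 3 := Complex.isPrimitiveRoot_exp 3 (by norm_num)
  have hω3 : ω ^ 3 = 1 := hωprim.pow_eq_one
  have hω1 : ω ≠ 1 := hωprim.ne_one (by norm_num)
  have hω0 : ω ≠ 0 := fun h => by rw [h] at hω3; norm_num at hω3
  have homega : 1 + ω + ω ^ 2 = 0 := by
    have h : (ω - 1) * (1 + ω + ω ^ 2) = 0 := by linear_combination hω3
    rcases mul_eq_zero.mp h with h' | h'
    · exact absurd (sub_eq_zero.mp h') hω1
    · exact h'
  have hω2ne1 : ω ^ 2 ≠ 1 := by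
    intro h
    have : ω = -2 := by linear_combination homega - h
    rw [this] at h; norm_num at h
  have hω2neω : ω ^ 2 ≠ ω := by
    intro h
    exact hω1 (mul_left_cancel₀ hω0 (by linear_combination h))
  have him : ω.im ≠ 0 := by
    intro h
    have hre : (ω.re : ℂ) = ω := by
      apply Complex.ext <;> simp [h]
    have h3 : (ω.re : ℝ) ^ 3 = 1 := by
      have h' := hω3
      rw [← hre] at h'
      exact_mod_cast h'
    have hre1 : ω.re = 1 := by
      have hfac : (ω.re - 1) * (ω.re ^ 2 + ω.re + 1) = 0 := by linear_combination h3
      rcases mul_eq_zero.mp hfac with h' | h'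
      · linarith [sub_eq_zero.mp h']
      · nlinarith [sq_nonneg (ω.re + 1), sq_nonneg ω.re]
    rw [hre1] at hre
    exact hω1 (by rw [← hre]; norm_num)
  -- the cubic character
  have h3card : (3 : ℕ) ∣ Fintype.card (ZMod p) - 1 := by rw [ZMod.card]; omega
  obtain ⟨χ, hχord⟩ := MulChar.exists_mulChar_orderOf (ZMod p) h3card hωprim
  have hχ3 : χ ^ 3 = 1 := hχord ▸ pow_orderOf_eq_one χ
  have hχ1 : χ ≠ 1 := by
    intro h; rw [h, orderOf_one] at hχord; norm_num at hχord
  have hχ2 : χ ^ 2 ≠ 1 := by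
    intro h
    have h' := orderOf_dvd_of_pow_eq_one h
    rw [hχord] at h'; norm_num at h'
  have hinv : χ⁻¹ = χ ^ 2 :=
    (eq_inv_of_mul_eq_one_left (by rw [← pow_succ]; exact hχ3)).symm
  have hone : ∀ z : ZMod p, z ≠ 0 → (1 : MulChar (ZMod p) ℂ) z = 1 := by
    intro z hz
    rw [← (isUnit_iff_ne_zero.mpr hz).unit_spec, MulChar.one_apply_coe]
  have hval3 : ∀ z : ZMod p, z ≠ 0 → (χ z) ^ 3 = 1 := by
    intro z hz
    rw [← MulChar.pow_apply' χ (by norm_num) z, hχ3, hone z hz]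
  have hneg1 : χ (-1) = 1 := by
    have h2 : (χ (-1)) ^ 2 = 1 := by
      rw [← map_pow]; norm_num
    have h3 : (χ (-1)) ^ 3 = 1 := hval3 (-1) (by
      simp only [ne_eq, neg_eq_zero]; exact one_ne_zero)
    calc χ (-1) = χ (-1) * (χ (-1)) ^ 2 := by rw [h2, mul_one]
    _ = 1 := by rw [← pow_succ']; exact h3
  have hchineg : ∀ y : ZMod p, χ (-y) = χ y := by
    intro y
    rw [show -y = -1 * y by ring, map_mul, hneg1, one_mul]
  -- generator and kernel description
  obtain ⟨g, hg⟩ := IsCyclic.exists_generator (α := (ZMod p)ˣ)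
  have hker : ∀ z : ZMod p, z ≠ 0 → (χ z = 1 ↔ Cb p z) := by
    intro z hz
    constructor
    · intro h1
      have hu := isUnit_iff_ne_zero.mpr hz
      obtain ⟨m, hm⟩ := hg hu.unit
      have hγ3 : (χ.toUnitHom g) ^ 3 = 1 := by
        ext
        push_cast [MulChar.coe_toUnitHom]
        exact hval3 _ (Units.ne_zero g)
      have hγ1 : χ.toUnitHom g ≠ 1 := by
        intro h
        apply hχ1
        rw [MulChar.eq_iff hg χ 1, MulChar.one_apply_coe, ← MulChar.coe_toUnitHom, h]
        rfl
      have hγord : orderOf (χ.toUnitHom g) = 3 := orderOf_eq_prime hγ3 hγ1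
      have hζm : (χ.toUnitHom g) ^ m = 1 := by
        ext
        push_cast [← map_zpow, MulChar.coe_toUnitHom, hm]
        rw [hu.unit_spec, h1]
      have hdvd : (3 : ℤ) ∣ m := by
        have := orderOf_dvd_iff_zpow_eq_one.mpr hζm
        rwa [hγord] at this
      obtain ⟨k, rfl⟩ := hdvd
      have hpow : g ^ (3 * k) = (g ^ k) ^ (3 : ℕ) := by
        rw [mul_comm, zpow_mul]
        norm_cast
      refine ⟨((g ^ k : (ZMod p)ˣ) : ZMod p), Units.ne_zero _, ?_⟩
      rw [← hu.unit_spec, ← hm]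
      show ((g ^ (3 * k) : (ZMod p)ˣ) : ZMod p) = _
      rw [hpow]
      push_cast
      rfl
    · rintro ⟨w, hw, rfl⟩
      rw [map_pow]
      exact hval3 w hw
  -- existence of d with χ d = ω, resp. χ d = ω²
  have hexists : ∃ d1 d2 : ZMod p, d1 ≠ 0 ∧ d2 ≠ 0 ∧ χ d1 = ω ∧ χ d2 = ω ^ 2 := by
    have hgne : (g : ZMod p) ≠ 0 := Units.ne_zero g
    have hg3 : (χ (g : ZMod p)) ^ 3 = 1 := hval3 _ hgne
    have hgne1 : χ (g : ZMod p) ≠ 1 := by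
      intro h
      apply hχ1
      rw [MulChar.eq_iff hg χ 1, MulChar.one_apply_coe, h]
    obtain ⟨i, hi, hiw⟩ := hωprim.eq_pow_of_pow_eq_one hg3
    interval_cases i
    · rw [pow_zero] at hiw; exact absurd hiw.symm hgne1
    · rw [pow_one] at hiw
      exact ⟨(g : ZMod p), (g : ZMod p) ^ 2, hgne, pow_ne_zero _ hgne,
        hiw.symm, by rw [map_pow, ← hiw]⟩
    · refine ⟨(g : ZMod p) ^ 2, (g : ZMod p), pow_ne_zero _ hgne, hgne,
        ?_, hiw.symm⟩
      rw [map_pow, ← hiw]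
      linear_combination ω * hω3
  obtain ⟨d1, d2, hd1ne, hd2ne, hd1ω, hd2ω⟩ := hexists
  have hncb1 : ¬ Cb p d1 := by
    intro h
    exact hω1 (by rw [← hd1ω]; exact (hker d1 hd1ne).mpr h)
  have hncb2 : ¬ Cb p d2 := by
    intro h
    exact hω2ne1 (by rw [← hd2ω]; exact (hker d2 hd2ne).mpr h)
  -- Jacobi sums
  set J : ℂ := jacobiSum χ χ with hJdef
  set J2 : ℂ := jacobiSum χ⁻¹ χ⁻¹ with hJ2def
  have hrc : ringChar ℂ ≠ ringChar (ZMod p) := by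
    rw [ringChar.eq_zero, ZMod.ringChar_zmod_n]
    exact fun h => hp.ne_zero h.symm
  have hJJ2 : J * J2 = (p : ℂ) := by
    rw [hJdef, hJ2def, jacobiSum_mul_jacobiSum_inv hrc hχ1 hχ1
      (by rw [← pow_two]; exact hχ2), ZMod.card]
  have hJmem : J ∈ Algebra.adjoin ℤ {ω} :=
    jacobiSum_mem_algebraAdjoin_of_pow_eq_one hχ3 hχ3 hωprim
  have hJ2mem : J2 ∈ Algebra.adjoin ℤ {ω} :=
    jacobiSum_mem_algebraAdjoin_of_pow_eq_one (by rw [inv_pow, hχ3, inv_one])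
      (by rw [inv_pow, hχ3, inv_one]) hωprim
  -- the main character sum computation
  have hsum : ∀ d : ZMod p, d ≠ 0 →
      ∑ x : ZMod p, (1 + χ x + χ x ^ 2) * (1 + χ (x - d) + χ (x - d) ^ 2)
        = (p : ℂ) - 2 + χ d ^ 2 * J + χ d * J2 := by
    intro d hd
    have hshift : ∀ f : ZMod p → ℂ, ∑ x : ZMod p, f (x - d) = ∑ x : ZMod p, f x :=
      fun f => Equiv.sum_comp (Equiv.subRight d) f
    have hmulshift : ∀ a b : ℕ, a ≠ 0 → b ≠ 0 →
        ∑ x : ZMod p, χ x ^ a * χ (x - d) ^ b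
          = χ d ^ (a + b) * jacobiSum (χ ^ a) (χ ^ b) := by
      intro a b ha hb
      have h1 : ∑ x : ZMod p, χ x ^ a * χ (x - d) ^ b
          = ∑ t : ZMod p, χ (d * t) ^ a * χ (d * t - d) ^ b :=
        (Equiv.sum_comp (Equiv.mulLeft₀ d hd) (fun x => χ x ^ a * χ (x - d) ^ b)).symm
      have h2 : ∀ t : ZMod p, χ (d * t) ^ a * χ (d * t - d) ^ b
          = χ d ^ (a + b) * (χ t ^ a * χ (t - 1) ^ b) := by
        intro t
        rw [show d * t - d = d * (t - 1) by ring, map_mul, map_mul]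
        ring
      rw [h1, Finset.sum_congr rfl (fun t _ => h2 t), ← Finset.mul_sum]
      congr 1
      rw [jacobiSum]
      apply Finset.sum_congr rfl
      intro t _
      rw [MulChar.pow_apply' χ ha, MulChar.pow_apply' χ hb,
        show (1 : ZMod p) - t = -(t - 1) by ring, hchineg]
    have expand : ∀ x : ZMod p,
        (1 + χ x + χ x ^ 2) * (1 + χ (x - d) + χ (x - d) ^ 2)
          = 1 + χ (x - d) + χ (x - d) ^ 2 + χ x + χ x ^ 2
            + χ x ^ 1 * χ (x - d) ^ 1 + χ x ^ 1 * χ (x - d) ^ 2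
            + χ x ^ 2 * χ (x - d) ^ 1 + χ x ^ 2 * χ (x - d) ^ 2 := by
      intro x; ring
    have echi : ∑ x : ZMod p, χ x = 0 := MulChar.sum_eq_zero_of_ne_one hχ1
    have echi2 : ∑ x : ZMod p, χ x ^ 2 = 0 := by
      have h' : ∑ x : ZMod p, χ x ^ 2 = ∑ x : ZMod p, (χ ^ 2) x :=
        Finset.sum_congr rfl fun x _ => (MulChar.pow_apply' χ two_ne_zero x).symm
      rw [h']
      exact MulChar.sum_eq_zero_of_ne_one hχ2
    have e1 : ∑ x : ZMod p, (1 : ℂ) = (p : ℂ) := by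
      rw [Finset.sum_const, Finset.card_univ, ZMod.card, nsmul_eq_mul, mul_one]
    have e2 : ∑ x : ZMod p, χ (x - d) = 0 := by
      rw [hshift (fun z => χ z)]; exact echi
    have e3 : ∑ x : ZMod p, χ (x - d) ^ 2 = 0 := by
      rw [hshift (fun z => χ z ^ 2)]; exact echi2
    have hd3 : χ d ^ 3 = 1 := hval3 d hd
    have e11 : ∑ x : ZMod p, χ x ^ 1 * χ (x - d) ^ 1 = χ d ^ 2 * J := by
      rw [hmulshift 1 1 one_ne_zero one_ne_zero, pow_one χ, hJdef]
    have e12 : ∑ x : ZMod p, χ x ^ 1 * χ (x - d) ^ 2 = -1 := by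
      rw [hmulshift 1 2 one_ne_zero two_ne_zero, pow_one χ, ← hinv,
        jacobiSum_nontrivial_inv hχ1, hneg1, hd3]
      ring
    have e21 : ∑ x : ZMod p, χ x ^ 2 * χ (x - d) ^ 1 = -1 := by
      rw [hmulshift 2 1 two_ne_zero one_ne_zero, pow_one χ, ← hinv,
        jacobiSum_comm, jacobiSum_nontrivial_inv hχ1, hneg1, show 2 + 1 = 3 by rfl, hd3]
      ring
    have e22 : ∑ x : ZMod p, χ x ^ 2 * χ (x - d) ^ 2 = χ d * J2 := by
      rw [hmulshift 2 2 two_ne_zero two_ne_zero, ← hinv, ← hJ2def,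
        show 2 + 2 = 4 by rfl, show χ d ^ 4 = χ d ^ 3 * χ d by ring, hd3, one_mul]
    calc ∑ x : ZMod p, (1 + χ x + χ x ^ 2) * (1 + χ (x - d) + χ (x - d) ^ 2)
        = ∑ x : ZMod p, (1 + χ (x - d) + χ (x - d) ^ 2 + χ x + χ x ^ 2
            + χ x ^ 1 * χ (x - d) ^ 1 + χ x ^ 1 * χ (x - d) ^ 2
            + χ x ^ 2 * χ (x - d) ^ 1 + χ x ^ 2 * χ (x - d) ^ 2) :=
          Finset.sum_congr rfl fun x _ => expand x
      _ = (p : ℂ) - 2 + χ d ^ 2 * J + χ d * J2 := by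
          simp only [Finset.sum_add_distrib]
          rw [e1, e2, e3, echi, echi2, e11, e12, e21, e22]
          ring
  -- the counting identity
  have hcount : ∀ d : ZMod p, d ≠ 0 → ¬ Cb p d →
      ({x : ZMod p | Cb p x ∧ Cb p (x - d)}.ncard : ℂ) * 9
        = ∑ x : ZMod p, (1 + χ x + χ x ^ 2) * (1 + χ (x - d) + χ (x - d) ^ 2) := by
    intro d hd hncb
    have hc : ∀ z : ZMod p, z ≠ 0 →
        (1 + χ z + χ z ^ 2) = if Cb p z then (3 : ℂ) else 0 := by
      intro z hz
      by_cases h : Cb p z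
      · rw [if_pos h, (hker z hz).mpr h]; norm_num
      · rw [if_neg h]
        have hu3 : (χ z) ^ 3 = 1 := hval3 z hz
        have hu1 : χ z ≠ 1 := fun h1 => h ((hker z hz).mp h1)
        have hfac : (χ z - 1) * (1 + χ z + χ z ^ 2) = 0 := by linear_combination hu3
        rcases mul_eq_zero.mp hfac with h' | h'
        · exact absurd (sub_eq_zero.mp h') hu1
        · exact h'
    have hpoint : ∀ x : ZMod p,
        (1 + χ x + χ x ^ 2) * (1 + χ (x - d) + χ (x - d) ^ 2)
          = if Cb p x ∧ Cb p (x - d) then (9 : ℂ) else 0 := by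
      intro x
      by_cases hx0 : x = 0
      · subst hx0
        have hχ0 : χ (0 : ZMod p) = 0 := MulChar.map_nonunit χ not_isUnit_zero
        have hcb0 : ¬ Cb p (0 : ZMod p) := fun h => cb_ne_zero h rfl
        have hcbd : ¬ Cb p ((0 : ZMod p) - d) := by
          intro h
          rw [zero_sub] at h
          have := cb_neg h
          rw [neg_neg] at this
          exact hncb this
        rw [if_neg (fun h => hcb0 h.1), hχ0, hc _ (by rwa [zero_sub, neg_ne_zero]),
          if_neg (by rwa [zero_sub] at hcbd ⊢)]
        norm_num
      · by_cases hxd : x = d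
        · subst hxd
          have hχ0 : χ (x - x) = 0 := by
            rw [sub_self]; exact MulChar.map_nonunit χ not_isUnit_zero
          have hcbd : ¬ Cb p (x - x) := by rw [sub_self]; exact fun h => cb_ne_zero h rfl
          rw [if_neg (fun h => hcbd h.2), hχ0, hc x hx0, if_neg hncb]
          norm_num
        · rw [hc x hx0, hc (x - d) (sub_ne_zero.mpr hxd)]
          by_cases h1 : Cb p x <;> by_cases h2 : Cb p (x - d) <;>
            simp [h1, h2] <;> norm_num
    rw [Finset.sum_congr rfl fun x _ => hpoint x, ← Finset.sum_filter,
      Finset.sum_const, nsmul_eq_mul]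
    have hsets : {x : ZMod p | Cb p x ∧ Cb p (x - d)}
        = ↑(Finset.univ.filter fun x => Cb p x ∧ Cb p (x - d)) := by
      ext x
      simp [Set.mem_setOf_eq]
    rw [hsets, Set.ncard_coe_finset]
  -- ℤ[ω] representation
  have hrep : ∀ z ∈ Algebra.adjoin ℤ {ω}, ∃ a b : ℤ, z = (a : ℂ) + (b : ℂ) * ω := by
    intro z hz
    induction hz using Algebra.adjoin_induction with
    | mem x hx =>
        rw [Set.mem_singleton_iff] at hx
        exact ⟨0, 1, by rw [hx]; push_cast; ring⟩
    | algebraMap r =>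
        exact ⟨r, 0, by rw [algebraMap_int_eq, eq_intCast]; push_cast; ring⟩
    | add x y hx hy ihx ihy =>
        obtain ⟨a, b, rfl⟩ := ihx
        obtain ⟨c, e, rfl⟩ := ihy
        exact ⟨a + c, b + e, by push_cast; ring⟩
    | mul x y hx hy ihx ihy =>
        obtain ⟨a, b, rfl⟩ := ihx
        obtain ⟨c, e, rfl⟩ := ihy
        refine ⟨a * c - b * e, a * e + b * c - b * e, ?_⟩
        push_cast
        linear_combination (b : ℂ) * (e : ℂ) * homega
  -- main conclusion
  refine ⟨d1, d2, hd1ne, hd2ne, hncb1, hncb2, ?_⟩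
  intro hEq
  have hs1 := hcount d1 hd1ne hncb1
  have hs2 := hcount d2 hd2ne hncb2
  rw [hsum d1 hd1ne, hd1ω] at hs1
  rw [hsum d2 hd2ne, hd2ω] at hs2
  have hsame : ((p : ℂ) - 2 + ω ^ 2 * J + ω * J2)
      = ((p : ℂ) - 2 + (ω ^ 2) ^ 2 * J + ω ^ 2 * J2) := by
    rw [← hs1, ← hs2, hEq]
  have hfac : (ω ^ 2 - ω) * (J - J2) = 0 := by
    linear_combination hsame + ω * J * hω3
  have hJeq : J = J2 := by
    rcases mul_eq_zero.mp hfac with h' | h'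
    · exact absurd (sub_eq_zero.mp h') hω2neω
    · exact sub_eq_zero.mp h'
  -- now J^2 = p with J ∈ ℤ[ω]: contradiction
  have hJJ : J * J = (p : ℂ) := by rw [hJeq] at hJJ2 ⊢; exact hJJ2
  obtain ⟨a, b, hab⟩ := hrep J hJmem
  rw [hab] at hJJ
  have hsq : ((a ^ 2 - b ^ 2 : ℤ) : ℂ) + ((2 * a * b - b ^ 2 : ℤ) : ℂ) * ω = (p : ℂ) := by
    push_cast
    linear_combination hJJ - (b : ℂ) ^ 2 * homega
  have himeq := congrArg Complex.im hsq
  simp only [Complex.add_im, Complex.mul_im, Complex.intCast_im, Complex.intCast_re,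
    Complex.natCast_im, zero_add, mul_zero, zero_mul, add_zero] at himeq
  have hz : (2 * a * b - b ^ 2 : ℤ) = 0 := by
    rcases mul_eq_zero.mp himeq with h' | h'
    · exact_mod_cast h'
    · exact absurd h' him
  rw [hz] at hsq
  have hre : (a ^ 2 - b ^ 2 : ℤ) = (p : ℤ) := by
    have h' : ((a ^ 2 - b ^ 2 : ℤ) : ℂ) = ((p : ℤ) : ℂ) := by
      push_cast at hsq ⊢
      linear_combination hsq
    exact_mod_cast h'
  have hb : b * (2 * a - b) = 0 := by linear_combination hz
  have hpz : Prime (p : ℤ) := Int.prime_iff_natAbs_prime.mpr (by simpa using hp)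
  have hp2 : (2 : ℤ) ≤ (p : ℤ) := by exact_mod_cast hp.two_le
  rcases mul_eq_zero.mp hb with h' | h'
  · -- b = 0 : p = a^2
    rw [h'] at hre
    exact hpz.not_isSquare ⟨a, by linear_combination -hre⟩
  · -- b = 2a : p = -3a^2 ≤ 0
    have hb2a : b = 2 * a := by linarith [sub_eq_zero.mp h']
    rw [hb2a] at hre
    nlinarith [sq_nonneg a]

/-- The generalized Paley graph `GPaley(p, (p-1)/3)` on `ZMod p`: distinct `x` and `y`
are adjacent iff `x - y` is a nonzero cube. (Both directions are required so that the
graph is well defined for every `p`; when `(p-1)/3` is even they are equivalent.) -/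
def gpaleyThird (p : ℕ) : SimpleGraph (ZMod p) where
  Adj x y := x ≠ y ∧ (∃ w : ZMod p, w ≠ 0 ∧ x - y = w ^ 3) ∧
    (∃ w : ZMod p, w ≠ 0 ∧ y - x = w ^ 3)
  symm := ⟨by rintro x y ⟨h1, h2, h3⟩; exact ⟨h1.symm, h3, h2⟩⟩
  loopless := ⟨by rintro x ⟨h1, -⟩; exact h1 rfl⟩

/-- `Γ` is strongly regular: there are constants `lam` and `mu` such that every two
adjacent vertices have exactly `lam` common neighbors and every two distinct
non-adjacent vertices have exactly `mu` common neighbors. -/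
def IsSRG {V : Type} (Γ : SimpleGraph V) : Prop :=
  ∃ lam mu : ℕ,
    (∀ u v : V, Γ.Adj u v → (Γ.commonNeighbors u v).ncard = lam) ∧
    (∀ u v : V, u ≠ v → ¬ Γ.Adj u v → (Γ.commonNeighbors u v).ncard = mu)

theorem stmt9 (p : ℕ) (hp : p.Prime) (hmod : p % 3 = 1) (heven : Even ((p - 1) / 3)) :
    ¬ IsSRG (gpaleyThird p) ∧
    ∃ u v u' v' : ZMod p, u ≠ v ∧ ¬ (gpaleyThird p).Adj u v ∧
      u' ≠ v' ∧ ¬ (gpaleyThird p).Adj u' v' ∧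
      ((gpaleyThird p).commonNeighbors u v).ncard
        ≠ ((gpaleyThird p).commonNeighbors u' v').ncard := by
  haveI : Fact p.Prime := ⟨hp⟩
  obtain ⟨d1, d2, hd1ne, hd2ne, hncb1, hncb2, hneq⟩ := gp_core p hp hmod
  have hAdj : ∀ u v : ZMod p, (gpaleyThird p).Adj u v ↔ u ≠ v ∧ Cb p (v - u) := by
    intro u v
    constructor
    · rintro ⟨h1, -, h3⟩
      exact ⟨h1, h3⟩
    · rintro ⟨h1, h3⟩
      refine ⟨h1, ?_, h3⟩
      have h' := cb_neg h3
      rwa [neg_sub] at h'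
  have hCN : ∀ d : ZMod p, (gpaleyThird p).commonNeighbors 0 d
      = {x : ZMod p | Cb p x ∧ Cb p (x - d)} := by
    intro d
    ext x
    rw [SimpleGraph.mem_commonNeighbors, hAdj, hAdj, Set.mem_setOf_eq]
    constructor
    · rintro ⟨⟨-, h1⟩, ⟨-, h2⟩⟩
      rw [sub_zero] at h1
      exact ⟨h1, h2⟩
    · rintro ⟨h1, h2⟩
      exact ⟨⟨fun h => cb_ne_zero h1 h.symm, by rwa [sub_zero]⟩,
        ⟨fun h => cb_ne_zero h2 (by rw [h, sub_self]), h2⟩⟩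
  have hnadj : ∀ d : ZMod p, ¬ Cb p d → ¬ (gpaleyThird p).Adj 0 d := by
    intro d hncb h
    rw [hAdj, sub_zero] at h
    exact hncb h.2
  have hneq' : ((gpaleyThird p).commonNeighbors 0 d1).ncard
      ≠ ((gpaleyThird p).commonNeighbors 0 d2).ncard := by
    rw [hCN d1, hCN d2]; exact hneq
  refine ⟨?_, 0, d1, 0, d2, fun h => hd1ne h.symm, hnadj d1 hncb1,
    fun h => hd2ne h.symm, hnadj d2 hncb2, hneq'⟩
  rintro ⟨lam, mu, -, hmu⟩
  exact hneq' ((hmu 0 d1 (fun h => hd1ne h.symm) (hnadj d1 hncb1)).trans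
    (hmu 0 d2 (fun h => hd2ne h.symm) (hnadj d2 hncb2)).symm)
end

section
/- Let m > 1 be an odd integer and let Γ be the complement of the tensor product K₄ × K_m, i.e., the graph with vertex set {0,1,2,3} × {0,…,m−1} in which distinct vertices (i,a) and (j,b) are adjacent if and only if i = j or a = b. Then Γ is a Deza graph with parameters (4m, m+2, m−2, 2). -/
/-- The complement of `K₄ × K_m`: distinct `(i,a)` and `(j,b)` are adjacent
iff `i = j` or `a = b`. -/
def gammaTen (m : ℕ) : SimpleGraph (Fin 4 × Fin m) where
  Adj v u := v ≠ u ∧ (v.1 = u.1 ∨ v.2 = u.2)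
  symm := by constructor; rintro v u ⟨h1, h2⟩; exact ⟨h1.symm, h2.imp Eq.symm Eq.symm⟩
  loopless := by constructor; rintro v ⟨h1, -⟩; exact h1 rfl

/-- `Γ` is a Deza graph with parameters `(n, k, b, a)`: it has `n` vertices, is
`k`-regular, and any pair of distinct vertices has either `a` or `b` common neighbors. -/
def IsDezaGraph {V : Type} (Γ : SimpleGraph V) (n k b a : ℕ) : Prop :=
  Nat.card V = n ∧ (∀ v, (Γ.neighborSet v).ncard = k) ∧
    ∀ u v : V, u ≠ v →
      (Γ.commonNeighbors u v).ncard = a ∨ (Γ.commonNeighbors u v).ncard = b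

lemma ncard_compl_fin {n : ℕ} (s : Set (Fin n)) : sᶜ.ncard = n - s.ncard := by
  have := Set.ncard_add_ncard_compl s
  simp [Nat.card_eq_fintype_card] at this
  omega

lemma inj_left (m : ℕ) (i : Fin 4) : Function.Injective (fun c : Fin m => (i, c)) :=
  fun x y h => congrArg Prod.snd h

lemma inj_right (m : ℕ) (a : Fin m) : Function.Injective (fun k : Fin 4 => (k, a)) :=
  fun x y h => congrArg Prod.fst h

theorem stmt10 (m : ℕ) (hm : 1 < m) (hodd : Odd m) :
    IsDezaGraph (gammaTen m) (4 * m) (m + 2) (m - 2) 2 := by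
  refine ⟨by simp [Nat.card_eq_fintype_card], ?_, ?_⟩
  · rintro ⟨i, a⟩
    have hset : (gammaTen m).neighborSet (i, a) =
        ((fun c => (i, c)) '' {a}ᶜ) ∪ ((fun k => (k, a)) '' {i}ᶜ) := by
      ext ⟨k, c⟩
      simp only [SimpleGraph.mem_neighborSet, gammaTen, Set.mem_union, Set.mem_image,
        Set.mem_compl_iff, Set.mem_singleton_iff, Prod.mk.injEq, ne_eq, Prod.ext_iff]
      constructor
      · rintro ⟨hne, h | h⟩
        · exact Or.inl ⟨c, fun hc => hne ⟨h, hc.symm⟩, h, rfl⟩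
        · exact Or.inr ⟨k, fun hk => hne ⟨hk.symm, h⟩, rfl, h⟩
      · rintro (⟨x, hx, hik, hxc⟩ | ⟨x, hx, hxk, hac⟩)
        · exact ⟨fun h => hx (hxc.trans h.2.symm), Or.inl hik⟩
        · exact ⟨fun h => hx (hxk.trans h.1.symm), Or.inr hac⟩
    have hdisj : Disjoint ((fun c => (i, c)) '' ({a}ᶜ : Set (Fin m)))
        ((fun k => (k, a)) '' ({i}ᶜ : Set (Fin 4))) := by
      rw [Set.disjoint_left]
      rintro ⟨k, c⟩ ⟨x, hx, hxe⟩ ⟨y, hy, hye⟩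
      exact hy ((congrArg Prod.fst hye).trans (congrArg Prod.fst hxe).symm)
    rw [hset, Set.ncard_union_eq hdisj (Set.toFinite _) (Set.toFinite _),
      Set.ncard_image_of_injective _ (inj_left m i),
      Set.ncard_image_of_injective _ (inj_right m a),
      ncard_compl_fin, ncard_compl_fin, Set.ncard_singleton, Set.ncard_singleton]
    omega
  · rintro ⟨i, a⟩ ⟨j, b⟩ huv
    by_cases hij : i = j
    · subst hij
      have hab : a ≠ b := fun h => huv (by rw [h])
      right
      have hset : (gammaTen m).commonNeighbors (i, a) (i, b) =
          (fun c => (i, c)) '' ({a, b}ᶜ : Set (Fin m)) := by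
        ext ⟨k, c⟩
        simp only [SimpleGraph.mem_commonNeighbors, SimpleGraph.mem_neighborSet, gammaTen,
          Set.mem_image, Set.mem_compl_iff, Set.mem_insert_iff, Set.mem_singleton_iff,
          ne_eq, Prod.ext_iff, not_or]
        constructor
        · rintro ⟨⟨hne1, h1⟩, hne2, h2⟩
          rcases h1 with h | h
          · refine ⟨c, ⟨fun hc => hne1 ⟨h, hc.symm⟩, fun hc => hne2 ⟨h, hc.symm⟩⟩, h, rfl⟩
          · rcases h2 with h' | h'
            · exact ⟨c, ⟨fun hc => hne1 ⟨h', hc.symm⟩, fun hc => hne2 ⟨h', hc.symm⟩⟩, h', rfl⟩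
            · exact absurd (h.trans h'.symm) hab
        · rintro ⟨x, ⟨hxa, hxb⟩, hik, hxc⟩
          subst hxc
          exact ⟨⟨fun h => hxa h.2.symm, Or.inl hik⟩, fun h => hxb h.2.symm, Or.inl hik⟩
      rw [hset, Set.ncard_image_of_injective _ (inj_left m i), ncard_compl_fin,
        Set.ncard_pair hab]
    · by_cases hab : a = b
      · subst hab
        left
        have hset : (gammaTen m).commonNeighbors (i, a) (j, a) =
            (fun k => (k, a)) '' ({i, j}ᶜ : Set (Fin 4)) := by
          ext ⟨k, c⟩
          simp only [SimpleGraph.mem_commonNeighbors, SimpleGraph.mem_neighborSet, gammaTen,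
            Set.mem_image, Set.mem_compl_iff, Set.mem_insert_iff, Set.mem_singleton_iff,
            ne_eq, Prod.ext_iff, not_or]
          constructor
          · rintro ⟨⟨hne1, h1⟩, hne2, h2⟩
            have hac : a = c := by
              rcases h1 with h | h
              · rcases h2 with h' | h'
                · exact absurd (h.trans h'.symm) hij
                · exact h'
              · exact h
            exact ⟨k, ⟨fun hk => hne1 ⟨hk.symm, hac⟩, fun hk => hne2 ⟨hk.symm, hac⟩⟩, rfl, hac⟩
          · rintro ⟨x, ⟨hxi, hxj⟩, hxk, hac⟩
            subst hxk
            exact ⟨⟨fun h => hxi h.1.symm, Or.inr hac⟩, fun h => hxj h.1.symm, Or.inr hac⟩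
        rw [hset, Set.ncard_image_of_injective _ (inj_right m a), ncard_compl_fin,
          Set.ncard_pair hij]
      · left
        have hset : (gammaTen m).commonNeighbors (i, a) (j, b) =
            {((i : Fin 4), (b : Fin m)), (j, a)} := by
          ext ⟨k, c⟩
          simp only [SimpleGraph.mem_commonNeighbors, SimpleGraph.mem_neighborSet, gammaTen,
            Set.mem_insert_iff, Set.mem_singleton_iff, ne_eq, Prod.ext_iff]
          constructor
          · rintro ⟨⟨hne1, h1 | h1⟩, hne2, h2 | h2⟩
            · exact absurd (h1.trans h2.symm) hij
            · exact Or.inl ⟨h1.symm, h2.symm⟩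
            · exact Or.inr ⟨h2.symm, h1.symm⟩
            · exact absurd (h1.trans h2.symm) hab
          · rintro (⟨rfl, rfl⟩ | ⟨rfl, rfl⟩)
            · exact ⟨⟨fun h => hab h.2, Or.inl rfl⟩, fun h => hij h.1.symm, Or.inr rfl⟩
            · exact ⟨⟨fun h => hij h.1, Or.inr rfl⟩, fun h => hab h.2.symm, Or.inl rfl⟩
        rw [hset, Set.ncard_pair (by simp [Prod.ext_iff]; intro h; exact absurd h hij)]
end

section
/- Let l, m > 1 be integers and let Γ = K_l[mK₂] be the lexicographic product of the complete graph K_l with the disjoint union of m edges, i.e., the graph with vertex set {0,…,l−1} × {0,…,m−1} × {0,1} in which distinct vertices (i,a,x) and (j,b,y) are adjacent if and only if i ≠ j, or (i = j, a = b and x ≠ y). Then Γ is a Deza graph with parameters (2lm, 2lm−2m+1, 2lm−2m, 2lm−4m+2). -/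
/-- The lexicographic product `K_l[mK₂]`: distinct `(i,a,x)` and `(j,b,y)` are adjacent
iff `i ≠ j`, or `i = j`, `a = b` and `x ≠ y`. -/
def gammaThirteen (l m : ℕ) : SimpleGraph (Fin l × Fin m × Fin 2) where
  Adj v u := v.1 ≠ u.1 ∨ (v.1 = u.1 ∧ v.2.1 = u.2.1 ∧ v.2.2 ≠ u.2.2)
  symm := by
    constructor
    rintro v u (h | ⟨h1, h2, h3⟩)
    · exact Or.inl h.symm
    · exact Or.inr ⟨h1.symm, h2.symm, h3.symm⟩
  loopless := by
    constructor
    rintro v (h | ⟨-, -, h⟩) <;> exact h rfl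

open Finset

lemma fin2_ne_iff : ∀ x y : Fin 2, ¬x = y ↔ y = 1 - x := by decide

lemma fin2_ne_ne : ∀ x y z : Fin 2, x ≠ z → y ≠ z → x = y := by decide

lemma card_fiber {l m : ℕ} (p : Fin l → Prop) [DecidablePred p] :
    (Finset.univ.filter (fun u : Fin l × Fin m × Fin 2 => p u.1)).card
      = (Finset.univ.filter p).card * (2 * m) := by
  rw [← Finset.univ_product_univ, Finset.filter_product_left, Finset.card_product]
  congr 1
  simp [Fintype.card_prod]
  ring

lemma ncard_filter {l m : ℕ} (s : Set (Fin l × Fin m × Fin 2)) (p : _ → Prop)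
    [DecidablePred p] (h : ∀ x, x ∈ s ↔ p x) :
    s.ncard = (Finset.univ.filter p).card := by
  classical
  rw [Set.ncard_eq_toFinset_card']
  congr 1
  ext x
  simp [h]

theorem stmt13 (l m : ℕ) (hl : 1 < l) (hm : 1 < m) :
    IsDezaGraph (gammaThirteen l m) (2 * l * m)
      (2 * l * m - 2 * m + 1) (2 * l * m - 2 * m) (2 * l * m - 4 * m + 2) := by
  classical
  have hsub1 : (l - 1) * (2 * m) = 2 * l * m - 2 * m := by
    rw [Nat.sub_mul]; congr 1 <;> ring
  have hsub2 : (l - 2) * (2 * m) = 2 * l * m - 4 * m := by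
    rw [Nat.sub_mul]; congr 1 <;> ring
  refine ⟨?_, ?_, ?_⟩
  · simp [Nat.card_eq_fintype_card]
    ring
  · intro v
    obtain ⟨i, a, x⟩ := v
    rw [ncard_filter _ (fun u => u.1 ≠ i ∨ u = (i, a, 1 - x)) ?memiff]
    · rw [Finset.filter_or, Finset.card_union_of_disjoint ?disj]
      · rw [card_fiber (m:=m) (fun j => j ≠ i), Finset.filter_eq', if_pos (Finset.mem_univ _),
          Finset.filter_ne', Finset.card_erase_of_mem (Finset.mem_univ _),
          Finset.card_univ, Fintype.card_fin, Finset.card_singleton, hsub1]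
      case disj =>
        rw [Finset.disjoint_left]
        rintro u hu hu'
        simp only [Finset.mem_filter] at hu hu'
        rw [hu'.2] at hu
        exact hu.2 rfl
    case memiff =>
      rintro ⟨j, b, y⟩
      simp only [SimpleGraph.mem_neighborSet, gammaThirteen, ne_eq]
      constructor
      · rintro (h | ⟨h1, h2, h3⟩)
        · exact Or.inl fun hh => h (hh.symm)
        · refine Or.inr ?_
          rw [fin2_ne_iff] at h3
          simp [← h1, ← h2, h3]
      · rintro (h | h)
        · exact Or.inl fun hh => h (hh.symm)
        · refine Or.inr ?_
          obtain ⟨rfl, rfl, rfl⟩ := Prod.mk.injEq .. ▸ (by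
            simpa [Prod.ext_iff] using h : j = i ∧ b = a ∧ y = 1 - x)
          exact ⟨rfl, rfl, by rw [fin2_ne_iff]⟩
  · intro u v huv
    by_cases hfst : u.1 = v.1
    · right
      rw [ncard_filter _ (fun w => w.1 ≠ u.1) ?memiff2]
      · rw [card_fiber (m:=m) (fun j => j ≠ u.1), Finset.filter_ne', Finset.card_erase_of_mem (Finset.mem_univ _),
          Finset.card_univ, Fintype.card_fin, hsub1]
      case memiff2 =>
        intro w
        simp only [SimpleGraph.mem_commonNeighbors, SimpleGraph.mem_neighborSet,
          gammaThirteen, ne_eq]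
        constructor
        · rintro ⟨hu | ⟨hu1, hu2, hu3⟩, hv | ⟨hv1, hv2, hv3⟩⟩
          · exact fun hh => hu hh.symm
          · exact fun hh => hu hh.symm
          · exact fun hh => hv (hfst ▸ hh.symm)
          · exfalso
            apply huv
            have h2 : u.2.1 = v.2.1 := hu2.trans hv2.symm
            have h3 : u.2.2 = v.2.2 := fin2_ne_ne _ _ _ hu3 hv3
            exact Prod.ext hfst (Prod.ext h2 h3)
        · intro h
          exact ⟨Or.inl fun hh => h hh.symm, Or.inl fun hh => h (hfst ▸ hh.symm)⟩
    · left
      rw [ncard_filter _ (fun w => (w.1 ≠ u.1 ∧ w.1 ≠ v.1) ∨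
        (w = (u.1, u.2.1, 1 - u.2.2) ∨ w = (v.1, v.2.1, 1 - v.2.2))) ?memiff3]
      · rw [Finset.filter_or, Finset.card_union_of_disjoint ?disj3]
        · rw [card_fiber (m:=m) (fun j => j ≠ u.1 ∧ j ≠ v.1), Finset.filter_and, Finset.filter_ne', Finset.filter_ne',
            Finset.erase_inter, Finset.inter_comm, Finset.erase_inter,
            Finset.inter_self]
          rw [Finset.card_erase_of_mem (Finset.mem_erase.mpr ⟨hfst, Finset.mem_univ _⟩),
            Finset.card_erase_of_mem (Finset.mem_univ _), Finset.card_univ,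
            Fintype.card_fin]
          have : l - 1 - 1 = l - 2 := by omega
          rw [this, hsub2]
          rw [Finset.filter_or]
          rw [Finset.filter_eq', if_pos (Finset.mem_univ _),
            Finset.filter_eq', if_pos (Finset.mem_univ _)]
          rw [Finset.card_union_of_disjoint (by
            rw [Finset.disjoint_singleton]
            simp only [ne_eq, Prod.mk.injEq, not_and]
            intro h _
            exact absurd h hfst)]
          simp
        case disj3 =>
          rw [Finset.disjoint_left]
          rintro w hw hw'
          simp only [Finset.mem_filter, Finset.mem_union] at hw hw'
          rcases hw'.2 with h | h
          · exact hw.2.1 (by rw [h])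
          · exact hw.2.2 (by rw [h])
      case memiff3 =>
        rintro ⟨w1, w2, w3⟩
        simp only [SimpleGraph.mem_commonNeighbors, SimpleGraph.mem_neighborSet,
          gammaThirteen, ne_eq]
        constructor
        · rintro ⟨hu | ⟨hu1, hu2, hu3⟩, hv | ⟨hv1, hv2, hv3⟩⟩
          · exact Or.inl ⟨fun hh => hu hh.symm, fun hh => hv hh.symm⟩
          · refine Or.inr (Or.inr ?_)
            rw [fin2_ne_iff] at hv3
            rw [← hv1, ← hv2, hv3]
          · refine Or.inr (Or.inl ?_)
            rw [fin2_ne_iff] at hu3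
            rw [← hu1, ← hu2, hu3]
          · exact absurd (hu1.trans hv1.symm) hfst
        · rintro (⟨h1, h2⟩ | h | h)
          · exact ⟨Or.inl fun hh => h1 hh.symm, Or.inl fun hh => h2 hh.symm⟩
          · injection h with h1 h
            injection h with h2 h3
            subst h1; subst h2; subst h3
            exact ⟨Or.inr ⟨rfl, rfl, by rw [fin2_ne_iff]⟩, Or.inl fun hh => hfst hh.symm⟩
          · injection h with h1 h
            injection h with h2 h3
            subst h1; subst h2; subst h3
            exact ⟨Or.inl fun hh => hfst hh, Or.inr ⟨rfl, rfl, by rw [fin2_ne_iff]⟩⟩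
end

section
/- Let p and q be primes with q − p = 4 and p ≡ q ≡ 3 (mod 4). Let Γ be the graph with vertex set (ℤ/pℤ) × (ℤ/qℤ) in which distinct vertices u and v are adjacent if and only if u − v ∈ S, where S consists of all pairs (0,b) with b ≠ 0, together with all pairs (a,b) with a ≠ 0 and b ≠ 0 such that exactly one of the following holds: a is a nonzero square in ℤ/pℤ, or b is a nonzero square in ℤ/qℤ. Then Γ is a Deza graph with parameters (pq, (pq+3)/2, (pq+7)/4, (pq+3)/4), and Γ is not strongly regular. -/
open Finset

/-- 0/1 Kronecker delta at zero, valued in ℤ. -/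
def dd {α : Type*} [DecidableEq α] [Zero α] (a : α) : ℤ := if a = 0 then 1 else 0

@[simp] lemma dd_zero {α : Type*} [DecidableEq α] [Zero α] : dd (0 : α) = 1 := by simp [dd]

lemma dd_of_ne {α : Type*} [DecidableEq α] [Zero α] {a : α} (h : a ≠ 0) : dd a = 0 := by
  simp [dd, h]

section CharSums

variable {F : Type*} [Field F] [Fintype F] [DecidableEq F]

lemma sum_dd_mul (w : F) (f : F → ℤ) : ∑ x : F, dd (x - w) * f x = f w := by
  rw [Finset.sum_eq_single w]
  · simp [dd]
  · intro b _ hb; simp [dd, sub_eq_zero, hb]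
  · simp

lemma sum_char_shift (hF : ringChar F ≠ 2) (w : F) :
    ∑ x : F, (quadraticChar F (x - w) : ℤ) = 0 := by
  rw [← quadraticChar_sum_zero hF]
  exact Fintype.sum_equiv (Equiv.subRight w) _ _ (fun y => rfl)

lemma sum_char_mul_char (hF : ringChar F ≠ 2) {c : F} (hc : c ≠ 0) :
    ∑ x : F, (quadraticChar F x : ℤ) * quadraticChar F (x - c) = -1 := by
  classical
  have h1 : ∑ x : F, (quadraticChar F x : ℤ) * quadraticChar F (x - c)
      = ∑ x ∈ (univ : Finset F).erase 0, (quadraticChar F (1 - c * x⁻¹) : ℤ) := by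
    rw [← Finset.sum_erase (univ : Finset F) (a := 0) (f := fun x => (quadraticChar F x : ℤ) * quadraticChar F (x - c)) (by show (quadraticChar F (0:F) : ℤ) * quadraticChar F ((0:F) - c) = 0; rw [quadraticChar_zero]; exact zero_mul _)]
    apply Finset.sum_congr rfl
    intro x hx
    have hx0 : x ≠ 0 := (Finset.mem_erase.mp hx).1
    have hxx : x * (x - c) = x ^ 2 * (1 - c * x⁻¹) := by field_simp
    rw [← map_mul, hxx, map_mul, quadraticChar_sq_one' hx0, one_mul]
  rw [h1]
  have h2 : ∑ x ∈ (univ : Finset F).erase 0, (quadraticChar F (1 - c * x⁻¹) : ℤ)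
      = ∑ y ∈ (univ : Finset F).erase 1, (quadraticChar F y : ℤ) := by
    apply Finset.sum_nbij' (fun x => 1 - c * x⁻¹) (fun y => c * (1 - y)⁻¹)
    · intro a ha
      have ha0 : a ≠ 0 := (Finset.mem_erase.mp ha).1
      simp only [Finset.mem_erase, Finset.mem_univ, and_true]
      intro h
      have : c * a⁻¹ = 0 := by linear_combination -h
      rcases mul_eq_zero.mp this with h' | h'
      · exact hc h'
      · exact ha0 (inv_eq_zero.mp h')
    · intro b hb
      have hb1 : b ≠ 1 := (Finset.mem_erase.mp hb).1
      simp only [Finset.mem_erase, Finset.mem_univ, and_true]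
      intro h
      rcases mul_eq_zero.mp h with h' | h'
      · exact hc h'
      · have h2 : (1 : F) - b = 0 := inv_eq_zero.mp h'
        exact hb1 (by linear_combination -h2)
    · intro a ha
      have ha0 : a ≠ 0 := (Finset.mem_erase.mp ha).1
      have hca : c * a⁻¹ ≠ 0 := mul_ne_zero hc (inv_ne_zero ha0)
      field_simp
      rw [sub_sub_cancel, div_self hc]
    · intro b hb
      have hb1 : (1 : F) - b ≠ 0 := sub_ne_zero.mpr (Ne.symm (Finset.mem_erase.mp hb).1)
      field_simp
      ring
    · intro a _; rfl
  rw [h2]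
  have h3 := Finset.sum_erase_add (univ : Finset F) (fun y => (quadraticChar F y : ℤ)) (Finset.mem_univ 1)
  have h4 : ∑ y : F, (quadraticChar F y : ℤ) = 0 := quadraticChar_sum_zero hF
  have h5 : (quadraticChar F (1 : F) : ℤ) = 1 := map_one _
  simp only [h5] at h3
  linarith

end CharSums
section BaseSums

variable {F : Type*} [Field F] [Fintype F] [DecidableEq F]

lemma sum_dd (w : F) : ∑ x : F, dd (x - w) = 1 := by
  have := sum_dd_mul w (fun _ => (1 : ℤ))
  simpa using this

lemma sum_A1 (z : F) :
    ∑ x : F, (1 + dd x) * (1 + dd (x - z)) = (Fintype.card F : ℤ) + 2 + dd z := by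
  have e1 : ∀ x : F, (1 + dd x) * (1 + dd (x - z))
      = 1 + dd (x - z) + (dd (x - 0) * 1 + dd (x - 0) * dd (x - z)) := by
    intro x; rw [sub_zero]; ring
  rw [Finset.sum_congr rfl (fun x _ => e1 x)]
  rw [Finset.sum_add_distrib, Finset.sum_add_distrib, Finset.sum_add_distrib,
    sum_dd, sum_dd_mul, sum_dd_mul]
  simp [Finset.card_univ, zero_sub, dd, neg_eq_zero]
  ring

lemma sum_B1 (z : F) :
    ∑ x : F, (1 - dd x) * (1 - dd (x - z)) = (Fintype.card F : ℤ) - 2 + dd z := by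
  have e1 : ∀ x : F, (1 - dd x) * (1 - dd (x - z))
      = 1 - dd (x - z) - (dd (x - 0) * 1 - dd (x - 0) * dd (x - z)) := by
    intro x; rw [sub_zero]; ring
  rw [Finset.sum_congr rfl (fun x _ => e1 x)]
  rw [Finset.sum_sub_distrib, Finset.sum_sub_distrib, Finset.sum_sub_distrib,
    sum_dd, sum_dd_mul, sum_dd_mul]
  simp [Finset.card_univ, zero_sub, dd, neg_eq_zero]
  ring

lemma sum_A2 (hF : ringChar F ≠ 2) (z : F) :
    ∑ x : F, (1 + dd x) * (quadraticChar F (x - z) : ℤ) = quadraticChar F (-z) := by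
  have e1 : ∀ x : F, (1 + dd x) * (quadraticChar F (x - z) : ℤ)
      = (quadraticChar F (x - z) : ℤ) + dd (x - 0) * (quadraticChar F (x - z) : ℤ) := by
    intro x; rw [sub_zero]; ring
  rw [Finset.sum_congr rfl (fun x _ => e1 x), Finset.sum_add_distrib,
    sum_char_shift hF, sum_dd_mul (f := fun x => (quadraticChar F (x - z) : ℤ))]
  rw [zero_add, zero_sub]

lemma sum_B2 (hF : ringChar F ≠ 2) (z : F) :
    ∑ x : F, (1 - dd x) * (quadraticChar F (x - z) : ℤ) = -quadraticChar F (-z) := by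
  have e1 : ∀ x : F, (1 - dd x) * (quadraticChar F (x - z) : ℤ)
      = (quadraticChar F (x - z) : ℤ) - dd (x - 0) * (quadraticChar F (x - z) : ℤ) := by
    intro x; rw [sub_zero]; ring
  rw [Finset.sum_congr rfl (fun x _ => e1 x), Finset.sum_sub_distrib,
    sum_char_shift hF, sum_dd_mul (f := fun x => (quadraticChar F (x - z) : ℤ))]
  rw [zero_sub, zero_sub]

lemma sum_A3 (hF : ringChar F ≠ 2) (z : F) :
    ∑ x : F, (quadraticChar F x : ℤ) * (1 + dd (x - z)) = quadraticChar F z := by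
  have e1 : ∀ x : F, (quadraticChar F x : ℤ) * (1 + dd (x - z))
      = (quadraticChar F (x - 0) : ℤ) + dd (x - z) * (quadraticChar F x : ℤ) := by
    intro x; rw [sub_zero]; ring
  rw [Finset.sum_congr rfl (fun x _ => e1 x), Finset.sum_add_distrib,
    sum_char_shift hF, sum_dd_mul (f := fun x => (quadraticChar F x : ℤ))]
  rw [zero_add]

lemma sum_B3 (hF : ringChar F ≠ 2) (z : F) :
    ∑ x : F, (1 - dd (x - z)) * (quadraticChar F x : ℤ) = -quadraticChar F z := by
  have e1 : ∀ x : F, (1 - dd (x - z)) * (quadraticChar F x : ℤ)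
      = (quadraticChar F (x - 0) : ℤ) - dd (x - z) * (quadraticChar F x : ℤ) := by
    intro x; rw [sub_zero]; ring
  rw [Finset.sum_congr rfl (fun x _ => e1 x), Finset.sum_sub_distrib,
    sum_char_shift hF, sum_dd_mul (f := fun x => (quadraticChar F x : ℤ))]
  rw [zero_sub]

lemma sum_A4 (hF : ringChar F ≠ 2) (z : F) :
    ∑ x : F, (quadraticChar F x : ℤ) * quadraticChar F (x - z)
      = if z = 0 then (Fintype.card F : ℤ) - 1 else -1 := by
  by_cases hz : z = 0
  · subst hz
    rw [if_pos rfl]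
    have e1 : ∀ x : F, (quadraticChar F x : ℤ) * quadraticChar F (x - 0) = 1 - dd x := by
      intro x
      rw [sub_zero]
      by_cases hx : x = 0
      · subst hx; simp [quadraticChar_zero]
      · rw [dd_of_ne hx]
        have := quadraticChar_sq_one (F := F) hx
        have h2 : (quadraticChar F x : ℤ) * quadraticChar F x = 1 := by
          rw [← pow_two]; exact_mod_cast this
        rw [h2]; ring
    rw [Finset.sum_congr rfl (fun x _ => e1 x), Finset.sum_sub_distrib]
    have : ∑ x : F, dd x = 1 := by
      have := sum_dd (0 : F); simpa using this
    rw [this]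
    simp [Finset.card_univ]
  · rw [if_neg hz]
    exact sum_char_mul_char hF hz

lemma quadChar_neg_one' (h3 : Fintype.card F % 4 = 3) :
    (quadraticChar F (-1) : ℤ) = -1 := by
  apply quadraticChar_neg_one_iff_not_isSquare.mpr
  rw [FiniteField.isSquare_neg_one_iff]
  simp [h3]

end BaseSums

/-- The connection set: all pairs `(0,b)` with `b ≠ 0`, together with all pairs `(a,b)`
with `a ≠ 0` and `b ≠ 0` such that exactly one of `a`, `b` is a nonzero square
(in `ZMod p`, resp. `ZMod q`). -/
def connSet (p q : ℕ) : Set (ZMod p × ZMod q) :=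
  {s | (s.1 = 0 ∧ s.2 ≠ 0) ∨
    (s.1 ≠ 0 ∧ s.2 ≠ 0 ∧
      Xor' (∃ w : ZMod p, w ≠ 0 ∧ s.1 = w ^ 2) (∃ w : ZMod q, w ≠ 0 ∧ s.2 = w ^ 2))}

/-- The Cayley graph over `(ZMod p) × (ZMod q)` with connection set `connSet p q`:
distinct `u` and `v` are adjacent iff `u - v` lies in the connection set. (Both
directions are required so that the graph is well defined in general; when
`p ≡ q ≡ 3 (mod 4)` they are equivalent.) -/
def gammaSixteen (p q : ℕ) : SimpleGraph (ZMod p × ZMod q) where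
  Adj u v := u ≠ v ∧ u - v ∈ connSet p q ∧ v - u ∈ connSet p q
  symm := ⟨by rintro u v ⟨h1, h2, h3⟩; exact ⟨h1.symm, h3, h2⟩⟩
  loopless := ⟨by rintro u ⟨h1, -⟩; exact h1 rfl⟩

noncomputable def indC (p q : ℕ) (s : ZMod p × ZMod q) : ℤ :=
  (connSet p q).indicator 1 s

section ConnSet

variable {p q : ℕ} [Fact p.Prime] [Fact q.Prime]

lemma exists_sq_iff {r : ℕ} [Fact r.Prime] {a : ZMod r} (ha : a ≠ 0) :
    (∃ w : ZMod r, w ≠ 0 ∧ a = w ^ 2) ↔ (quadraticChar (ZMod r) a : ℤ) = 1 := by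
  have : (quadraticChar (ZMod r) a = 1) ↔ IsSquare a := quadraticChar_one_iff_isSquare ha
  rw [show ((quadraticChar (ZMod r) a : ℤ) = 1) ↔ (quadraticChar (ZMod r) a = 1) from Iff.rfl, this]
  constructor
  · rintro ⟨w, _, rfl⟩
    exact ⟨w, by ring⟩
  · rintro ⟨w, rfl⟩
    refine ⟨w, fun h0 => ha (by rw [h0]; ring), by ring⟩

lemma mem_connSetIff (s : ZMod p × ZMod q) :
    s ∈ connSet p q ↔ s.2 ≠ 0 ∧ (s.1 = 0 ∨
      (quadraticChar (ZMod p) s.1 : ℤ) * quadraticChar (ZMod q) s.2 = -1) := by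
  obtain ⟨a, b⟩ := s
  simp only [connSet, Set.mem_setOf_eq]
  by_cases hb : b = 0
  · simp [hb]
  by_cases ha : a = 0
  · simp [ha, hb]
  · simp only [ha, hb, false_and, Ne, not_false_iff, true_and, false_or]
    rw [Xor']
    rw [exists_sq_iff (r := p) ha, exists_sq_iff (r := q) hb]
    rcases quadraticChar_dichotomy (F := ZMod p) ha with h1 | h1 <;>
      rcases quadraticChar_dichotomy (F := ZMod q) hb with h2 | h2 <;>
      simp [h1, h2]

lemma indC_eq (a : ZMod p) (b : ZMod q) :
    2 * indC p q (a, b) = (1 - dd b) *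
      ((1 + dd a) - (quadraticChar (ZMod p) a : ℤ) * quadraticChar (ZMod q) b) := by
  by_cases hb : b = 0
  · have hm : (a, b) ∉ connSet p q := by
      rw [mem_connSetIff]; simp [hb]
    rw [indC, Set.indicator_of_notMem hm]
    subst hb; simp
  by_cases ha : a = 0
  · have hm : (a, b) ∈ connSet p q := by rw [mem_connSetIff]; exact ⟨hb, Or.inl ha⟩
    rw [indC, Set.indicator_of_mem hm]
    subst ha
    simp [dd_of_ne hb, quadraticChar_zero]
  · rw [dd_of_ne ha, dd_of_ne hb]
    rcases mul_self_eq_one_iff.mp (show ((quadraticChar (ZMod p) a : ℤ) * quadraticChar (ZMod q) b)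
        * ((quadraticChar (ZMod p) a : ℤ) * quadraticChar (ZMod q) b) = 1 by
      have h1 := quadraticChar_sq_one (F := ZMod p) ha
      have h2 := quadraticChar_sq_one (F := ZMod q) hb
      have h1' : (quadraticChar (ZMod p) a : ℤ) * quadraticChar (ZMod p) a = 1 := by
        rw [← pow_two]; exact_mod_cast h1
      have h2' : (quadraticChar (ZMod q) b : ℤ) * quadraticChar (ZMod q) b = 1 := by
        rw [← pow_two]; exact_mod_cast h2
      calc ((quadraticChar (ZMod p) a : ℤ) * quadraticChar (ZMod q) b)
            * ((quadraticChar (ZMod p) a : ℤ) * quadraticChar (ZMod q) b)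
          = ((quadraticChar (ZMod p) a : ℤ) * quadraticChar (ZMod p) a)
            * ((quadraticChar (ZMod q) b : ℤ) * quadraticChar (ZMod q) b) := by ring
        _ = 1 := by rw [h1', h2', one_mul]) with hpm | hpm
    · have hm : (a, b) ∉ connSet p q := by
        rw [mem_connSetIff]
        simp only [hpm]
        rintro ⟨-, h | h⟩
        · exact ha h
        · omega
      rw [indC, Set.indicator_of_notMem hm, hpm]
      ring
    · have hm : (a, b) ∈ connSet p q := by
        rw [mem_connSetIff]; exact ⟨hb, Or.inr hpm⟩
      rw [indC, Set.indicator_of_mem hm, hpm]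
      simp only [Pi.one_apply]
      ring

end ConnSet

section Master

variable {p q : ℕ} [Fact p.Prime] [Fact q.Prime]

lemma four_N (hp4 : p % 4 = 3) (hq4 : q % 4 = 3) (d : ZMod p × ZMod q) :
    4 * ∑ x : ZMod p × ZMod q, indC p q x * indC p q (x - d)
      = ((p : ℤ) + 2 + dd d.1) * ((q : ℤ) - 2 + dd d.2)
        + 2 * ((quadraticChar (ZMod p) d.1 : ℤ) * quadraticChar (ZMod q) d.2)
        + (if d.1 = 0 then (p : ℤ) - 1 else -1) * (if d.2 = 0 then (q : ℤ) - 1 else -1) := by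
  have hp : p.Prime := Fact.out
  have hq : q.Prime := Fact.out
  haveI : NeZero p := ⟨hp.ne_zero⟩
  haveI : NeZero q := ⟨hq.ne_zero⟩
  have hp2 : p ≠ 2 := by omega
  have hq2 : q ≠ 2 := by omega
  have hFp : ringChar (ZMod p) ≠ 2 := by rw [ZMod.ringChar_zmod_n]; exact hp2
  have hFq : ringChar (ZMod q) ≠ 2 := by rw [ZMod.ringChar_zmod_n]; exact hq2
  have hcardp : (Fintype.card (ZMod p) : ℤ) = p := by rw [ZMod.card]
  have hcardq : (Fintype.card (ZMod q) : ℤ) = q := by rw [ZMod.card]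
  have hmod4p : Fintype.card (ZMod p) % 4 = 3 := by rw [ZMod.card]; exact hp4
  have hmod4q : Fintype.card (ZMod q) % 4 = 3 := by rw [ZMod.card]; exact hq4
  obtain ⟨c, e⟩ := d
  have key : ∀ (a : ZMod p) (b : ZMod q),
      4 * (indC p q (a, b) * indC p q ((a, b) - (c, e)))
      = ((1 + dd a) * (1 + dd (a - c))) * ((1 - dd b) * (1 - dd (b - e)))
        - ((1 + dd a) * (quadraticChar (ZMod p) (a - c) : ℤ))
            * ((1 - dd b) * (quadraticChar (ZMod q) (b - e) : ℤ))
        - ((quadraticChar (ZMod p) a : ℤ) * (1 + dd (a - c)))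
            * ((1 - dd (b - e)) * (quadraticChar (ZMod q) b : ℤ))
        + ((quadraticChar (ZMod p) a : ℤ) * (quadraticChar (ZMod p) (a - c) : ℤ))
            * ((quadraticChar (ZMod q) b : ℤ) * (quadraticChar (ZMod q) (b - e) : ℤ)) := by
    intro a b
    have hsub : ((a, b) - (c, e) : ZMod p × ZMod q) = (a - c, b - e) := rfl
    have expand : 4 * (indC p q (a, b) * indC p q (a - c, b - e))
        = (2 * indC p q (a, b)) * (2 * indC p q (a - c, b - e)) := by ring
    rw [hsub, expand, indC_eq, indC_eq]
    have f1 : (1 - dd b) * (quadraticChar (ZMod q) b : ℤ) = quadraticChar (ZMod q) b := by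
      rcases eq_or_ne b 0 with hb | hb
      · rw [hb]; simp [quadraticChar_zero]
      · rw [dd_of_ne hb]; ring
    have f2 : (1 - dd (b - e)) * (quadraticChar (ZMod q) (b - e) : ℤ)
        = quadraticChar (ZMod q) (b - e) := by
      rcases eq_or_ne (b - e) 0 with hb | hb
      · rw [hb]; simp [quadraticChar_zero]
      · rw [dd_of_ne hb]; ring
    linear_combination
      ((quadraticChar (ZMod p) a : ℤ) * (quadraticChar (ZMod p) (a - c) : ℤ)
          * (1 - dd b) * (quadraticChar (ZMod q) b : ℤ)
        - (1 + dd a) * (quadraticChar (ZMod p) (a - c) : ℤ) * (1 - dd b)) * f2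
      + ((quadraticChar (ZMod p) a : ℤ) * (quadraticChar (ZMod p) (a - c) : ℤ)
            * (quadraticChar (ZMod q) (b - e) : ℤ)
          - (quadraticChar (ZMod p) a : ℤ) * (1 + dd (a - c)) * (1 - dd (b - e))) * f1
  calc 4 * ∑ x : ZMod p × ZMod q, indC p q x * indC p q (x - (c, e))
      = ∑ x : ZMod p × ZMod q, 4 * (indC p q x * indC p q (x - (c, e))) := by
        rw [Finset.mul_sum]
    _ = ∑ a : ZMod p, ∑ b : ZMod q, 4 * (indC p q (a, b) * indC p q ((a, b) - (c, e))) := by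
        rw [Fintype.sum_prod_type]
    _ = ∑ a : ZMod p,
          (((1 + dd a) * (1 + dd (a - c))) * (∑ b : ZMod q, (1 - dd b) * (1 - dd (b - e)))
          - ((1 + dd a) * (quadraticChar (ZMod p) (a - c) : ℤ))
              * (∑ b : ZMod q, (1 - dd b) * (quadraticChar (ZMod q) (b - e) : ℤ))
          - ((quadraticChar (ZMod p) a : ℤ) * (1 + dd (a - c)))
              * (∑ b : ZMod q, (1 - dd (b - e)) * (quadraticChar (ZMod q) b : ℤ))
          + ((quadraticChar (ZMod p) a : ℤ) * (quadraticChar (ZMod p) (a - c) : ℤ))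
              * (∑ b : ZMod q, (quadraticChar (ZMod q) b : ℤ)
                  * (quadraticChar (ZMod q) (b - e) : ℤ))) := by
        apply Finset.sum_congr rfl
        intro a _
        rw [Finset.sum_congr rfl (fun b _ => key a b)]
        rw [Finset.sum_add_distrib, Finset.sum_sub_distrib, Finset.sum_sub_distrib,
          ← Finset.mul_sum, ← Finset.mul_sum, ← Finset.mul_sum, ← Finset.mul_sum]
    _ = (∑ a : ZMod p, (1 + dd a) * (1 + dd (a - c)))
          * (∑ b : ZMod q, (1 - dd b) * (1 - dd (b - e)))
        - (∑ a : ZMod p, (1 + dd a) * (quadraticChar (ZMod p) (a - c) : ℤ))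
          * (∑ b : ZMod q, (1 - dd b) * (quadraticChar (ZMod q) (b - e) : ℤ))
        - (∑ a : ZMod p, (quadraticChar (ZMod p) a : ℤ) * (1 + dd (a - c)))
          * (∑ b : ZMod q, (1 - dd (b - e)) * (quadraticChar (ZMod q) b : ℤ))
        + (∑ a : ZMod p, (quadraticChar (ZMod p) a : ℤ) * (quadraticChar (ZMod p) (a - c) : ℤ))
          * (∑ b : ZMod q, (quadraticChar (ZMod q) b : ℤ)
              * (quadraticChar (ZMod q) (b - e) : ℤ)) := by
        rw [Finset.sum_add_distrib, Finset.sum_sub_distrib, Finset.sum_sub_distrib,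
          ← Finset.sum_mul, ← Finset.sum_mul, ← Finset.sum_mul, ← Finset.sum_mul]
    _ = ((p : ℤ) + 2 + dd c) * ((q : ℤ) - 2 + dd e)
        - (quadraticChar (ZMod p) (-c) : ℤ) * (-(quadraticChar (ZMod q) (-e) : ℤ))
        - (quadraticChar (ZMod p) c : ℤ) * (-(quadraticChar (ZMod q) e : ℤ))
        + (if c = 0 then (p : ℤ) - 1 else -1) * (if e = 0 then (q : ℤ) - 1 else -1) := by
        rw [sum_A1, sum_B1, sum_A2 hFp, sum_B2 hFq, sum_A3 hFp, sum_B3 hFq,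
          sum_A4 hFp, sum_A4 hFq, hcardp, hcardq]
    _ = _ := by
        have hcneg : (quadraticChar (ZMod p) (-c) : ℤ) = -(quadraticChar (ZMod p) c : ℤ) := by
          rw [show (-c : ZMod p) = (-1) * c by ring, map_mul, quadChar_neg_one' hmod4p]
          ring
        have heneg : (quadraticChar (ZMod q) (-e) : ℤ) = -(quadraticChar (ZMod q) e : ℤ) := by
          rw [show (-e : ZMod q) = (-1) * e by ring, map_mul, quadChar_neg_one' hmod4q]
          ring
        rw [hcneg, heneg]
        ring

end Master

lemma ncard_int {α : Type*} [Fintype α] (A : Set α) :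
    (A.ncard : ℤ) = ∑ x : α, A.indicator 1 x := by
  classical
  rw [show A.ncard = (Finset.univ.filter (· ∈ A)).card by
        rw [← Set.ncard_coe_finset]; congr 1; ext x; simp]
  rw [Finset.card_filter]
  push_cast
  apply Finset.sum_congr rfl
  intro x _
  by_cases hx : x ∈ A
  · simp [hx, Set.indicator_of_mem]
  · simp [hx, Set.indicator_of_notMem]

section Graph

variable {p q : ℕ} [Fact p.Prime] [Fact q.Prime]

lemma quadChar_neg_mul {F : Type*} [Field F] [Fintype F] [DecidableEq F]
    (h3 : Fintype.card F % 4 = 3) (a : F) :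
    (quadraticChar F (-a) : ℤ) = -(quadraticChar F a : ℤ) := by
  rw [show (-a : F) = (-1) * a by ring, map_mul, quadChar_neg_one' h3]
  ring

lemma mem_neg_iff (hp4 : p % 4 = 3) (hq4 : q % 4 = 3) (s : ZMod p × ZMod q) :
    -s ∈ connSet p q ↔ s ∈ connSet p q := by
  have hp : p.Prime := Fact.out
  have hq : q.Prime := Fact.out
  haveI : NeZero p := ⟨hp.ne_zero⟩
  haveI : NeZero q := ⟨hq.ne_zero⟩
  have hmod4p : Fintype.card (ZMod p) % 4 = 3 := by rw [ZMod.card]; exact hp4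
  have hmod4q : Fintype.card (ZMod q) % 4 = 3 := by rw [ZMod.card]; exact hq4
  obtain ⟨a, b⟩ := s
  have hneg : (-(a, b) : ZMod p × ZMod q) = (-a, -b) := rfl
  rw [hneg, mem_connSetIff, mem_connSetIff]
  simp only [ne_eq, quadChar_neg_mul hmod4p, quadChar_neg_mul hmod4q, neg_mul_neg, neg_eq_zero]

lemma adj_iff (hp4 : p % 4 = 3) (hq4 : q % 4 = 3) (u v : ZMod p × ZMod q) :
    (gammaSixteen p q).Adj u v ↔ u - v ∈ connSet p q := by
  constructor
  · rintro ⟨-, h, -⟩; exact h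
  · intro h
    have hne : u ≠ v := by
      rintro rfl
      rw [mem_connSetIff] at h
      exact h.1 (by simp)
    refine ⟨hne, h, ?_⟩
    rw [← neg_sub u v]
    exact (mem_neg_iff hp4 hq4 _).mpr h

lemma common_count (hp4 : p % 4 = 3) (hq4 : q % 4 = 3) (u v : ZMod p × ZMod q) :
    4 * ((((gammaSixteen p q).commonNeighbors u v)).ncard : ℤ)
      = ((p : ℤ) + 2 + dd (u - v).1) * ((q : ℤ) - 2 + dd (u - v).2)
        + 2 * ((quadraticChar (ZMod p) (u - v).1 : ℤ) * quadraticChar (ZMod q) (u - v).2)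
        + (if (u - v).1 = 0 then (p : ℤ) - 1 else -1)
          * (if (u - v).2 = 0 then (q : ℤ) - 1 else -1) := by
  have h1 : (((gammaSixteen p q).commonNeighbors u v).ncard : ℤ)
      = ∑ x : ZMod p × ZMod q, indC p q (x - u) * indC p q (x - v) := by
    rw [ncard_int]
    apply Finset.sum_congr rfl
    intro x _
    by_cases hx : x ∈ (gammaSixteen p q).commonNeighbors u v
    · rw [Set.indicator_of_mem hx]
      obtain ⟨hxu, hxv⟩ := hx
      rw [SimpleGraph.mem_neighborSet, adj_iff hp4 hq4] at hxu hxv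
      rw [← neg_sub x u, mem_neg_iff hp4 hq4] at hxu
      rw [← neg_sub x v, mem_neg_iff hp4 hq4] at hxv
      simp only [indC]
      rw [Set.indicator_of_mem hxu, Set.indicator_of_mem hxv]
      simp
    · rw [Set.indicator_of_notMem hx]
      rw [SimpleGraph.commonNeighbors, Set.mem_inter_iff, not_and_or] at hx
      rcases hx with hx | hx
      · rw [SimpleGraph.mem_neighborSet, adj_iff hp4 hq4] at hx
        rw [← neg_sub x u, mem_neg_iff hp4 hq4] at hx
        simp only [indC]
        rw [Set.indicator_of_notMem hx, zero_mul]
      · rw [SimpleGraph.mem_neighborSet, adj_iff hp4 hq4] at hx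
        rw [← neg_sub x v, mem_neg_iff hp4 hq4] at hx
        simp only [indC]
        rw [Set.indicator_of_notMem hx, mul_zero]
  have h2 : ∑ x : ZMod p × ZMod q, indC p q (x - u) * indC p q (x - v)
      = ∑ y : ZMod p × ZMod q, indC p q y * indC p q (y - (u - v)) := by
    apply Fintype.sum_equiv (Equiv.subRight v)
    intro x
    simp only [Equiv.subRight_apply]
    rw [show x - v - (u - v) = x - u from by ring, mul_comm]
  rw [h1, h2]
  exact four_N hp4 hq4 (u - v)

lemma deg_count (hp4 : p % 4 = 3) (hq4 : q % 4 = 3) (v : ZMod p × ZMod q) :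
    4 * (((gammaSixteen p q).neighborSet v).ncard : ℤ)
      = ((p : ℤ) + 3) * ((q : ℤ) - 1) + ((p : ℤ) - 1) * ((q : ℤ) - 1) := by
  have h1 : (((gammaSixteen p q).neighborSet v).ncard : ℤ)
      = ∑ x : ZMod p × ZMod q, indC p q x := by
    rw [ncard_int]
    trans (∑ w : ZMod p × ZMod q, indC p q (w - v))
    · apply Finset.sum_congr rfl
      intro w _
      by_cases hw : w - v ∈ connSet p q
      · have hmem : w ∈ (gammaSixteen p q).neighborSet v := by
          rw [SimpleGraph.mem_neighborSet, adj_iff hp4 hq4]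
          have := (mem_neg_iff hp4 hq4 (w - v)).mpr hw
          rwa [neg_sub] at this
        rw [Set.indicator_of_mem hmem]
        simp only [indC]
        rw [Set.indicator_of_mem hw]
        simp
      · have hmem : w ∉ (gammaSixteen p q).neighborSet v := by
          rw [SimpleGraph.mem_neighborSet, adj_iff hp4 hq4]
          intro h
          have := (mem_neg_iff hp4 hq4 (v - w)).mpr h
          rw [neg_sub] at this
          exact hw this
        rw [Set.indicator_of_notMem hmem]
        simp only [indC]
        rw [Set.indicator_of_notMem hw]
    · exact Fintype.sum_equiv (Equiv.subRight v) _ _ (fun x => rfl)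
  have h4 := four_N (p := p) (q := q) hp4 hq4 0
  have h5 : ∑ x : ZMod p × ZMod q, indC p q x * indC p q (x - 0)
      = ∑ x : ZMod p × ZMod q, indC p q x := by
    apply Finset.sum_congr rfl
    intro x _
    rw [sub_zero]
    simp only [indC]
    by_cases hx : x ∈ connSet p q
    · rw [Set.indicator_of_mem hx]; simp
    · rw [Set.indicator_of_notMem hx]; simp
  rw [h5] at h4
  rw [h1, h4]
  norm_num [Prod.fst_zero, Prod.snd_zero, dd_zero, quadraticChar_zero]
  ring

end Graph

theorem stmt16 (p q : ℕ) (hp : p.Prime) (hq : q.Prime) (hqp : q = p + 4)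
    (hp4 : p % 4 = 3) (hq4 : q % 4 = 3) :
    IsDezaGraph (gammaSixteen p q) (p * q) ((p * q + 3) / 2) ((p * q + 7) / 4)
      ((p * q + 3) / 4) ∧
    ¬ IsSRG (gammaSixteen p q) := by
  haveI : Fact p.Prime := ⟨hp⟩
  haveI : Fact q.Prime := ⟨hq⟩
  haveI : NeZero p := ⟨hp.ne_zero⟩
  haveI : NeZero q := ⟨hq.ne_zero⟩
  have hp3 : 3 ≤ p := by omega
  have hq7 : 7 ≤ q := by omega
  haveI : Fact (1 < p) := ⟨by omega⟩
  haveI : Fact (1 < q) := ⟨by omega⟩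
  have hqz : (q : ℤ) = (p : ℤ) + 4 := by exact_mod_cast hqp
  have hFq : ringChar (ZMod q) ≠ 2 := by rw [ZMod.ringChar_zmod_n]; omega
  refine ⟨⟨?_, ?_, ?_⟩, ?_⟩
  · -- number of vertices
    rw [Nat.card_eq_fintype_card, Fintype.card_prod, ZMod.card, ZMod.card]
  · -- regularity
    intro v
    have h := deg_count hp4 hq4 v
    have hZ : 4 * ((((gammaSixteen p q).neighborSet v).ncard : ℤ))
        = 2 * ((p : ℤ) * q + 3) := by rw [h, hqz]; ring
    have hN : 4 * ((gammaSixteen p q).neighborSet v).ncard = 2 * (p * q + 3) := by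
      exact_mod_cast hZ
    omega
  · -- Deza property
    intro u v huv
    have h := common_count hp4 hq4 u v
    have hd : u - v ≠ 0 := sub_ne_zero.mpr huv
    by_cases hc : (u - v).1 = 0
    · have he : (u - v).2 ≠ 0 := by
        intro h2
        exact hd (by rw [Prod.ext_iff]; exact ⟨hc, h2⟩)
      rw [hc, dd_zero, dd_of_ne he, quadraticChar_zero, if_pos rfl, if_neg he] at h
      have hZ : 4 * ((((gammaSixteen p q).commonNeighbors u v).ncard : ℤ))
          = (p : ℤ) * q + 7 := by rw [h, hqz]; ring
      have hN : 4 * ((gammaSixteen p q).commonNeighbors u v).ncard = p * q + 7 := by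
        exact_mod_cast hZ
      omega
    · by_cases he : (u - v).2 = 0
      · rw [he, dd_zero, dd_of_ne hc, quadraticChar_zero, if_pos rfl, if_neg hc] at h
        have hZ : 4 * ((((gammaSixteen p q).commonNeighbors u v).ncard : ℤ))
            = (p : ℤ) * q + 3 := by rw [h, hqz]; ring
        have hN : 4 * ((gammaSixteen p q).commonNeighbors u v).ncard = p * q + 3 := by
          exact_mod_cast hZ
        omega
      · rw [dd_of_ne hc, dd_of_ne he, if_neg hc, if_neg he] at h
        have hprod : (quadraticChar (ZMod p) (u - v).1 : ℤ)
              * quadraticChar (ZMod q) (u - v).2 = 1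
            ∨ (quadraticChar (ZMod p) (u - v).1 : ℤ)
              * quadraticChar (ZMod q) (u - v).2 = -1 := by
          rcases quadraticChar_dichotomy (F := ZMod p) hc with h1 | h1 <;>
            rcases quadraticChar_dichotomy (F := ZMod q) he with h2 | h2 <;>
              rw [h1, h2] <;> norm_num
        rcases hprod with hpr | hpr
        · rw [hpr] at h
          have hZ : 4 * ((((gammaSixteen p q).commonNeighbors u v).ncard : ℤ))
              = (p : ℤ) * q + 7 := by rw [h, hqz]; ring
          have hN : 4 * ((gammaSixteen p q).commonNeighbors u v).ncard = p * q + 7 := by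
            exact_mod_cast hZ
          omega
        · rw [hpr] at h
          have hZ : 4 * ((((gammaSixteen p q).commonNeighbors u v).ncard : ℤ))
              = (p : ℤ) * q + 3 := by rw [h, hqz]; ring
          have hN : 4 * ((gammaSixteen p q).commonNeighbors u v).ncard = p * q + 3 := by
            exact_mod_cast hZ
          omega
  · -- not strongly regular
    rintro ⟨lam, mu, hadjcount, -⟩
    have h1ne : (1 : ZMod q) ≠ 0 := one_ne_zero
    have hp1 : (1 : ZMod p) ≠ 0 := one_ne_zero
    -- first adjacent pair: (0,1) and 0
    have hadj1 : (gammaSixteen p q).Adj ((0 : ZMod p), (1 : ZMod q)) 0 := by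
      rw [adj_iff hp4 hq4, sub_zero, mem_connSetIff]
      exact ⟨h1ne, Or.inl rfl⟩
    have hc1 := common_count hp4 hq4 ((0 : ZMod p), (1 : ZMod q)) 0
    rw [sub_zero] at hc1
    rw [show (((0 : ZMod p), (1 : ZMod q))).1 = 0 from rfl,
      show (((0 : ZMod p), (1 : ZMod q))).2 = 1 from rfl,
      dd_zero, dd_of_ne h1ne, quadraticChar_zero, if_pos rfl, if_neg h1ne] at hc1
    have e1 : 4 * ((((gammaSixteen p q).commonNeighbors
        ((0 : ZMod p), (1 : ZMod q)) 0).ncard : ℤ)) = (p : ℤ) * q + 7 := by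
      rw [hc1, hqz]; ring
    -- second adjacent pair: (1, e0) and 0 with e0 a nonsquare
    obtain ⟨e0, he0⟩ := FiniteField.exists_nonsquare (F := ZMod q) hFq
    have he0z : e0 ≠ 0 := by
      intro h0
      exact he0 (by rw [h0]; exact ⟨0, by ring⟩)
    have hψ : (quadraticChar (ZMod q) e0 : ℤ) = -1 :=
      quadraticChar_neg_one_iff_not_isSquare.mpr he0
    have hadj2 : (gammaSixteen p q).Adj ((1 : ZMod p), e0) 0 := by
      rw [adj_iff hp4 hq4, sub_zero, mem_connSetIff]
      refine ⟨he0z, Or.inr ?_⟩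
      rw [show (((1 : ZMod p), e0)).1 = 1 from rfl, show (((1 : ZMod p), e0)).2 = e0 from rfl,
        map_one, hψ, one_mul]
    have hc2 := common_count hp4 hq4 ((1 : ZMod p), e0) 0
    rw [sub_zero] at hc2
    rw [show (((1 : ZMod p), e0)).1 = 1 from rfl, show (((1 : ZMod p), e0)).2 = e0 from rfl,
      dd_of_ne hp1, dd_of_ne he0z, map_one, hψ, if_neg hp1, if_neg he0z] at hc2
    have e2 : 4 * ((((gammaSixteen p q).commonNeighbors
        ((1 : ZMod p), e0) 0).ncard : ℤ)) = (p : ℤ) * q + 3 := by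
      rw [hc2, hqz]; ring
    have l1 := hadjcount _ _ hadj1
    have l2 := hadjcount _ _ hadj2
    rw [l1] at e1
    rw [l2] at e2
    have e1' : 4 * lam = p * q + 7 := by exact_mod_cast e1
    have e2' : 4 * lam = p * q + 3 := by exact_mod_cast e2
    omega
end
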